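/- arXiv:2505.07588 — 6 statements merged into one kernel-verified Lean document; each statement's English description precedes it below -/
import Mathlib

section
/- For n ≥ 2, the cat number of the path on n vertices satisfies cat(P_n) = ⌈log₂ n⌉. -/
open SimpleGraph

universe u

/-- The cat can move from `u` to `w` in `G`: there is a nontrivial path,
equivalently `w ≠ u` and `w` is reachable from `u`. -/
def CatMove {V : Type u} (G : SimpleGraph V) (u w : V) : Prop :=
  u ≠ w ∧ G.Reachable u w

/-- `CapturedIn G v n` : with the cat on `v` and the herder to cut next,
the herder can guarantee that the cat is isolated after at most `n` edge deletions. -/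
inductive CapturedIn {V : Type u} : SimpleGraph V → V → ℕ → Prop
  | isolated {G : SimpleGraph V} {v : V} {n : ℕ} (h : ∀ w, ¬ G.Adj v w) :
      CapturedIn G v n
  | cut {G : SimpleGraph V} {v : V} {n : ℕ} (e : Sym2 V) (he : e ∈ G.edgeSet)
      (h : ∀ w, CatMove (G.deleteEdges {e}) v w → CapturedIn (G.deleteEdges {e}) w n) :
      CapturedIn G v (n + 1)

/-- The cat number of `G` with the cat starting at `v` (the game value; `⊤` if
the herder cannot guarantee capture within any fixed number of cuts). -/
noncomputable def catVNum {V : Type u} (G : SimpleGraph V) (v : V) : ℕ∞ :=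
  sInf (Nat.cast '' {m : ℕ | CapturedIn G v m})

/-- The cat number of `G`: the cat picks the best starting vertex. -/
noncomputable def catNum {V : Type u} (G : SimpleGraph V) : ℕ∞ :=
  ⨆ v, catVNum G v

/-- The cat, starting at `v`, can evade capture forever: there is a set of safe
positions (remaining graph, cat location), closed under responding to any cut. -/
def CatWinFrom {V : Type u} (G : SimpleGraph V) (v : V) : Prop :=
  ∃ S : Set (SimpleGraph V × V), (G, v) ∈ S ∧
    ∀ p ∈ S, (∃ w, p.1.Adj p.2 w) ∧
      ∀ e ∈ p.1.edgeSet, ∃ w, CatMove (p.1.deleteEdges {e}) p.2 w ∧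
        (p.1.deleteEdges {e}, w) ∈ S

/-- `G` is cat-win if the cat can evade capture forever from some starting vertex. -/
def CatWin {V : Type u} (G : SimpleGraph V) : Prop :=
  ∃ v, CatWinFrom G v

/-- `Evades G v n` : the cat on `v` has a strategy giving a valid response to each
of the next `n` cuts. -/
inductive Evades {V : Type u} : SimpleGraph V → V → ℕ → Prop
  | zero {G : SimpleGraph V} {v : V} : Evades G v 0
  | succ {G : SimpleGraph V} {v : V} {n : ℕ} (move : Sym2 V → V)
      (hmove : ∀ e ∈ G.edgeSet, CatMove (G.deleteEdges {e}) v (move e))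
      (h : ∀ e ∈ G.edgeSet, Evades (G.deleteEdges {e}) (move e) n) :
      Evades G v (n + 1)

/-- `G` is `k`-evadible for every `k`: for each `n` the cat can respond to the
first `n` cuts from a suitable starting vertex. -/
def OmegaEvadible {V : Type u} (G : SimpleGraph V) : Prop :=
  ∀ n : ℕ, ∃ v, Evades G v n

/-- The infinite complete binary tree on binary strings. -/
def binTree : SimpleGraph (List Bool) :=
  SimpleGraph.fromRel (fun a b => ∃ t : Bool, b = a ++ [t])

/-- `H` is a minor of `G` : disjoint connected branch sets, one per vertex of `H`,
with an edge of `G` between branch sets for every edge of `H`. -/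
def IsMinor {W : Type*} {V : Type u} (H : SimpleGraph W) (G : SimpleGraph V) : Prop :=
  ∃ B : W → Set V,
    (∀ w, (G.induce (B w)).Connected) ∧
    (Pairwise fun w₁ w₂ => Disjoint (B w₁) (B w₂)) ∧
    (∀ w₁ w₂, H.Adj w₁ w₂ → ∃ x ∈ B w₁, ∃ y ∈ B w₂, G.Adj x y)

/-- Every pair of distinct vertices is joined by two edge-disjoint (finite) paths. -/
def TwoEdgeConnected {V : Type u} (G : SimpleGraph V) : Prop :=
  ∀ u v : V, u ≠ v → ∃ (p q : G.Walk u v), p.IsPath ∧ q.IsPath ∧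
    ∀ e ∈ p.edges, e ∉ q.edges

/-- `x` has degree exactly 1 in `G`. -/
def DegOne {V : Type u} (G : SimpleGraph V) (x : V) : Prop :=
  ∃ a, G.neighborSet x = {a}

/-- `x` has degree exactly 2 in `G`. -/
def DegTwo {V : Type u} (G : SimpleGraph V) (x : V) : Prop :=
  ∃ a b, a ≠ b ∧ G.neighborSet x = {a, b}

/-- `x` has degree exactly 3 in `G`. -/
def DegThree {V : Type u} (G : SimpleGraph V) (x : V) : Prop :=
  ∃ a b c, a ≠ b ∧ a ≠ c ∧ b ≠ c ∧ G.neighborSet x = {a, b, c}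

/-- `x` has degree at least `k` in `G`. -/
def DegGe {V : Type u} (G : SimpleGraph V) (x : V) (k : ℕ) : Prop :=
  ∃ s : Finset V, s.card = k ∧ ∀ a ∈ s, G.Adj x a

namespace CatPath

/-- The cat's component in `G` (a subgraph of the path) is exactly the interval `[a,b]`. -/
structure PS (n : ℕ) (G : SimpleGraph (Fin n)) (a b : ℕ) : Prop where
  hab : a ≤ b
  hb : b < n
  sub : G ≤ SimpleGraph.pathGraph n
  inside : ∀ i j : Fin n, a ≤ i.val → i.val + 1 = j.val → j.val ≤ b → G.Adj i j
  left : ∀ i j : Fin n, i.val + 1 = a → j.val = a → ¬ G.Adj i j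
  right : ∀ i j : Fin n, i.val = b → j.val = b + 1 → ¬ G.Adj i j

variable {n : ℕ} {G : SimpleGraph (Fin n)} {a b : ℕ}

lemma adj_consec (hsub : G ≤ SimpleGraph.pathGraph n) {x y : Fin n} (h : G.Adj x y) :
    x.val + 1 = y.val ∨ y.val + 1 = x.val :=
  pathGraph_adj.mp (hsub h)

lemma step_mem (hPS : PS n G a b) {u x : Fin n} (hu : a ≤ u.val) (hu' : u.val ≤ b)
    (h : G.Adj u x) : a ≤ x.val ∧ x.val ≤ b := by
  rcases adj_consec hPS.sub h with h1 | h1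
  · by_cases hb : u.val = b
    · exact absurd h (hPS.right u x hb (by omega))
    · omega
  · by_cases ha : u.val = a
    · exact absurd h.symm (hPS.left x u (by omega) ha)
    · omega

lemma mem_of_reachable (hPS : PS n G a b) {v w : Fin n} (hv : a ≤ v.val) (hv' : v.val ≤ b)
    (h : G.Reachable v w) : a ≤ w.val ∧ w.val ≤ b := by
  obtain ⟨p⟩ := h
  induction p with
  | nil => exact ⟨hv, hv'⟩
  | cons h p ih =>
    obtain ⟨h1, h2⟩ := step_mem hPS hv hv' h
    exact ih h1 h2

lemma reach_add (hPS : PS n G a b) :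
    ∀ (k : ℕ) (u : Fin n), a ≤ u.val → u.val + k ≤ b →
      ∀ (w : Fin n), w.val = u.val + k → G.Reachable u w := by
  intro k
  induction k with
  | zero =>
    intro u _ _ w hw
    have : w = u := Fin.ext (by omega)
    rw [this]
  | succ k ih =>
    intro u hu hu' w hw
    have hx : u.val + 1 < n := by have := hPS.hb; omega
    set x : Fin n := ⟨u.val + 1, hx⟩ with hxdef
    have hxval : x.val = u.val + 1 := rfl
    have hadj : G.Adj u x := hPS.inside u x hu hxval.symm (by omega)
    exact hadj.reachable.trans (ih x (by omega) (by omega) w (by omega))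

lemma reachable_of_mem (hPS : PS n G a b) {v w : Fin n} (hv : a ≤ v.val) (hv' : v.val ≤ b)
    (hw : a ≤ w.val) (hw' : w.val ≤ b) : G.Reachable v w := by
  have ha : a < n := by have := hPS.hb; omega
  set z : Fin n := ⟨a, ha⟩ with hz
  have hzval : z.val = a := rfl
  have r1 : G.Reachable z v := reach_add hPS (v.val - a) z (by omega) (by omega) v (by omega)
  have r2 : G.Reachable z w := reach_add hPS (w.val - a) z (by omega) (by omega) w (by omega)
  exact r1.symm.trans r2

lemma edge_cases (hsub : G ≤ SimpleGraph.pathGraph n) {e : Sym2 (Fin n)} (he : e ∈ G.edgeSet) :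
    ∃ (x y : Fin n), e = s(x, y) ∧ G.Adj x y ∧ x.val + 1 = y.val := by
  induction e using Sym2.ind with
  | _ x y =>
    rw [SimpleGraph.mem_edgeSet] at he
    rcases adj_consec hsub he with h1 | h1
    · exact ⟨x, y, rfl, he, h1⟩
    · exact ⟨y, x, Sym2.eq_swap, he.symm, h1⟩

lemma PS_del_outside (hPS : PS n G a b) {x y : Fin n} (hxy : x.val + 1 = y.val)
    (hout : ¬(a ≤ x.val ∧ x.val < b)) : PS n (G.deleteEdges {s(x, y)}) a b where
  hab := hPS.hab
  hb := hPS.hb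
  sub := (deleteEdges_le _).trans hPS.sub
  inside := by
    intro i j hi hij hj
    rw [deleteEdges_adj]
    refine ⟨hPS.inside i j hi hij hj, ?_⟩
    simp only [Set.mem_singleton_iff, Sym2.eq_iff]
    rintro (⟨rfl, rfl⟩ | ⟨rfl, rfl⟩) <;> omega
  left := fun i j h1 h2 h => hPS.left i j h1 h2 (deleteEdges_adj.mp h).1
  right := fun i j h1 h2 h => hPS.right i j h1 h2 (deleteEdges_adj.mp h).1

lemma PS_del_left (hPS : PS n G a b) {x y : Fin n} (hxy : x.val + 1 = y.val)
    (hax : a ≤ x.val) (hxb : x.val < b) : PS n (G.deleteEdges {s(x, y)}) a x.val where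
  hab := hax
  hb := x.isLt
  sub := (deleteEdges_le _).trans hPS.sub
  inside := by
    intro i j hi hij hj
    rw [deleteEdges_adj]
    refine ⟨hPS.inside i j hi hij (by omega), ?_⟩
    simp only [Set.mem_singleton_iff, Sym2.eq_iff]
    rintro (⟨rfl, rfl⟩ | ⟨rfl, rfl⟩) <;> omega
  left := fun i j h1 h2 h => hPS.left i j h1 h2 (deleteEdges_adj.mp h).1
  right := by
    intro i j h1 h2 h
    rw [deleteEdges_adj] at h
    refine h.2 ?_
    simp only [Set.mem_singleton_iff, Sym2.eq_iff]
    left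
    exact ⟨Fin.ext h1, Fin.ext (by omega)⟩

lemma PS_del_right (hPS : PS n G a b) {x y : Fin n} (hxy : x.val + 1 = y.val)
    (hax : a ≤ x.val) (hxb : x.val < b) : PS n (G.deleteEdges {s(x, y)}) (x.val + 1) b where
  hab := by omega
  hb := hPS.hb
  sub := (deleteEdges_le _).trans hPS.sub
  inside := by
    intro i j hi hij hj
    rw [deleteEdges_adj]
    refine ⟨hPS.inside i j (by omega) hij hj, ?_⟩
    simp only [Set.mem_singleton_iff, Sym2.eq_iff]
    rintro (⟨rfl, rfl⟩ | ⟨rfl, rfl⟩) <;> omega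
  left := by
    intro i j h1 h2 h
    rw [deleteEdges_adj] at h
    refine h.2 ?_
    simp only [Set.mem_singleton_iff, Sym2.eq_iff]
    left
    exact ⟨Fin.ext (by omega), Fin.ext (by omega)⟩
  right := fun i j h1 h2 h => hPS.right i j h1 h2 (deleteEdges_adj.mp h).1

lemma has_neighbor (hPS : PS n G a b) {v : Fin n} (hv : a ≤ v.val) (hv' : v.val ≤ b)
    (hab : a < b) : ∃ w, G.Adj v w := by
  have hbn := hPS.hb
  by_cases h : v.val < b
  · set u : Fin n := ⟨v.val + 1, by omega⟩ with hu
    have huval : u.val = v.val + 1 := rfl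
    exact ⟨u, hPS.inside v u hv huval.symm (by omega)⟩
  · set u : Fin n := ⟨v.val - 1, by omega⟩ with hu
    have huval : u.val = v.val - 1 := rfl
    exact ⟨u, (hPS.inside u v (by omega) (by omega) (by omega)).symm⟩

theorem upper : ∀ (k a b : ℕ) (G : SimpleGraph (Fin n)) (v : Fin n), PS n G a b →
    a ≤ v.val → v.val ≤ b → b - a < 2 ^ k → CapturedIn G v k := by
  intro k
  induction k with
  | zero =>
    intro a b G v hPS hv hv' hlt
    have hab : a = b := by simp at hlt; omega
    refine CapturedIn.isolated fun w hw => ?_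
    rcases adj_consec hPS.sub hw with h1 | h1
    · exact hPS.right v w (by omega) (by omega) hw
    · exact hPS.left w v (by omega) (by omega) hw.symm
  | succ k ih =>
    intro a b G v hPS hv hv' hlt
    by_cases hab : a = b
    · refine CapturedIn.isolated fun w hw => ?_
      rcases adj_consec hPS.sub hw with h1 | h1
      · exact hPS.right v w (by omega) (by omega) hw
      · exact hPS.left w v (by omega) (by omega) hw.symm
    · have hab' : a < b := lt_of_le_of_ne hPS.hab hab
      have hbn := hPS.hb
      set m : ℕ := (a + b) / 2 with hm
      have hm1 : a ≤ m := by omega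
      have hm2 : m < b := by omega
      set x : Fin n := ⟨m, by omega⟩ with hx
      set y : Fin n := ⟨m + 1, by omega⟩ with hy
      have hxv : x.val = m := rfl
      have hyv : y.val = m + 1 := rfl
      have hxy : x.val + 1 = y.val := by omega
      have hadj : G.Adj x y := hPS.inside x y (by omega) (by omega) (by omega)
      refine CapturedIn.cut s(x, y) hadj ?_
      rintro w ⟨hne, hreach⟩
      by_cases hside : v.val ≤ m
      · have hL := PS_del_left hPS hxy (by omega) (by omega)
        rw [hxv] at hL
        obtain ⟨hw1, hw2⟩ := mem_of_reachable hL hv hside hreach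
        exact ih a m _ w hL hw1 hw2 (by omega)
      · have hR := PS_del_right hPS hxy (by omega) (by omega)
        rw [hxv] at hR
        obtain ⟨hw1, hw2⟩ := mem_of_reachable hR (by omega) hv' hreach
        exact ih (m + 1) b _ w hR hw1 hw2 (by omega)

lemma choose_j (N L d : ℕ) (hN : 1 ≤ N) (hL : N ≤ L) (hd : d ≤ L)
    (h : N ≤ d ∨ N ≤ L - d) :
    ∃ j, j ≤ L ∧ j ≠ d ∧ N ≤ 2 * j + 1 ∧ N ≤ 2 * (L - j) + 1 := by
  by_cases hdh : d = L / 2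
  · exact ⟨L / 2 + 1, by omega⟩
  · exact ⟨L / 2, by omega⟩

theorem lower : ∀ (m a b : ℕ) (G : SimpleGraph (Fin n)) (v : Fin n), PS n G a b →
    a < b → a ≤ v.val → v.val ≤ b →
    2 ^ m ≤ 2 * (v.val - a) + 1 → 2 ^ m ≤ 2 * (b - v.val) + 1 →
    ¬ CapturedIn G v m := by
  intro m
  induction m with
  | zero =>
    intro a b G v hPS hab hv hv' _ _ hcap
    cases hcap with
    | isolated h =>
      obtain ⟨w, hw⟩ := has_neighbor hPS hv hv' hab
      exact h w hw
  | succ m ih =>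
    intro a b G v hPS hab hv hv' hc1 hc2 hcap
    have hN : (1:ℕ) ≤ 2 ^ m := Nat.one_le_two_pow
    have hNd : 2 * 2 ^ m ≤ 2 * (v.val - a) + 1 := by rw [pow_succ] at hc1; omega
    have hNd2 : 2 * 2 ^ m ≤ 2 * (b - v.val) + 1 := by rw [pow_succ] at hc2; omega
    cases hcap with
    | isolated h =>
      obtain ⟨w, hw⟩ := has_neighbor hPS hv hv' hab
      exact h w hw
    | cut e he h =>
      obtain ⟨x, y, rfl, hadj, hxy⟩ := edge_cases hPS.sub he
      have hbn := hPS.hb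
      by_cases hin : a ≤ x.val ∧ x.val < b
      · by_cases hvx : v.val ≤ x.val
        · -- cat on the left part [a, x.val]
          have hL := PS_del_left hPS hxy hin.1 hin.2
          obtain ⟨j, hj1, hj2, hj3, hj4⟩ := choose_j (2 ^ m) (x.val - a) (v.val - a) hN
            (by omega) (by omega) (by omega)
          set w : Fin n := ⟨a + j, by omega⟩ with hw
          have hwval : w.val = a + j := rfl
          have hmove : CatMove (G.deleteEdges {s(x, y)}) v w :=
            ⟨fun hvw => hj2 (by have := congrArg Fin.val hvw; omega),
             reachable_of_mem hL hv hvx (by omega) (by omega)⟩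
          exact ih a x.val _ w hL (by omega) (by omega) (by omega)
            (by omega) (by omega) (h w hmove)
        · -- cat on the right part [x.val + 1, b]
          have hR := PS_del_right hPS hxy hin.1 hin.2
          obtain ⟨j, hj1, hj2, hj3, hj4⟩ := choose_j (2 ^ m) (b - (x.val + 1))
            (v.val - (x.val + 1)) hN (by omega) (by omega) (by omega)
          set w : Fin n := ⟨x.val + 1 + j, by omega⟩ with hw
          have hwval : w.val = x.val + 1 + j := rfl
          have hmove : CatMove (G.deleteEdges {s(x, y)}) v w :=
            ⟨fun hvw => hj2 (by have := congrArg Fin.val hvw; omega),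
             reachable_of_mem hR (by omega) hv' (by omega) (by omega)⟩
          exact ih (x.val + 1) b _ w hR (by omega) (by omega) (by omega)
            (by omega) (by omega) (h w hmove)
      · -- the cut is outside the cat's component
        have hO := PS_del_outside hPS hxy hin
        obtain ⟨j, hj1, hj2, hj3, hj4⟩ := choose_j (2 ^ m) (b - a) (v.val - a) hN
          (by omega) (by omega) (by omega)
        set w : Fin n := ⟨a + j, by omega⟩ with hw
        have hwval : w.val = a + j := rfl
        have hmove : CatMove (G.deleteEdges {s(x, y)}) v w :=
          ⟨fun hvw => hj2 (by have := congrArg Fin.val hvw; omega),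
           reachable_of_mem hO hv hv' (by omega) (by omega)⟩
        exact ih a b _ w hO hab (by omega) (by omega)
          (by omega) (by omega) (h w hmove)

lemma CapturedIn.mono {V : Type u} {G : SimpleGraph V} {v : V} {m m' : ℕ}
    (h : CapturedIn G v m) (hm : m ≤ m') : CapturedIn G v m' := by
  induction h generalizing m' with
  | isolated h => exact CapturedIn.isolated h
  | cut e he h ih =>
    obtain ⟨m'', rfl⟩ : ∃ m'', m' = m'' + 1 := ⟨m' - 1, by omega⟩
    exact CapturedIn.cut e he fun w hw => ih w hw (by omega)

lemma PS_path (n : ℕ) (hn : 2 ≤ n) : PS n (SimpleGraph.pathGraph n) 0 (n - 1) where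
  hab := by omega
  hb := by omega
  sub := le_rfl
  inside := fun i j _ hij _ => pathGraph_adj.mpr (Or.inl hij)
  left := fun i j h1 _ _ => by omega
  right := fun i j _ h2 _ => by have := j.isLt; omega

end CatPath


/-- For `n ≥ 2`, `cat(P_n) = ⌈log₂ n⌉`. -/
theorem catNum_pathGraph (n : ℕ) (hn : 2 ≤ n) :
    catNum (SimpleGraph.pathGraph n) = (Nat.clog 2 n : ℕ∞) := by
  set k := Nat.clog 2 n with hk
  have hk1 : 1 ≤ k := Nat.clog_pos (by norm_num) hn
  have hPS := CatPath.PS_path n hn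
  apply le_antisymm
  · -- upper bound
    apply iSup_le
    intro v
    have hcap : CapturedIn (SimpleGraph.pathGraph n) v k := by
      apply CatPath.upper k 0 (n - 1) _ v hPS (by omega) (by omega)
      have h1 := Nat.le_pow_clog (b := 2) (by norm_num) n
      rw [← hk] at h1
      omega
    exact sInf_le ⟨k, hcap, rfl⟩
  · -- lower bound
    have h2k : 2 ^ (k - 1) < n := by
      have := (Nat.lt_clog_iff_pow_lt (b := 2) (by norm_num) (x := n) (y := k - 1)).mp
        (by omega)
      omega
    set h : ℕ := 2 ^ (k - 1) with hh
    set v0 : Fin n := ⟨h / 2, by omega⟩ with hv0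
    have hv0val : v0.val = h / 2 := rfl
    have hlow : ¬ CapturedIn (SimpleGraph.pathGraph n) v0 (k - 1) := by
      apply CatPath.lower (k - 1) 0 (n - 1) _ v0 hPS (by omega) (by omega) (by omega)
        (by omega) (by omega)
    have hle : (k : ℕ∞) ≤ catVNum (SimpleGraph.pathGraph n) v0 := by
      apply le_sInf
      rintro x ⟨m, hm, rfl⟩
      refine Nat.cast_le.mpr ?_
      by_contra hcon
      exact hlow (CatPath.CapturedIn.mono hm (by omega))
    exact hle.trans (le_iSup (fun v => catVNum (SimpleGraph.pathGraph n) v) v0)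
end

section
/- For n ≥ 3, the cat number of the cycle on n vertices satisfies cat(C_n) = ⌈log₂(2⌊n/2⌋)⌉ + 1; equivalently, cat(C_{2k}) = cat(C_{2k+1}) = ⌈log₂(2k)⌉ + 1 for 2k ≥ 3. -/
open SimpleGraph

universe u

namespace CatProof

open Fin.NatCast

theorem capturedIn_mono {V : Type u} {G : SimpleGraph V} {v : V} {m : ℕ}
    (h : CapturedIn G v m) : ∀ m', m ≤ m' → CapturedIn G v m' := by
  induction h with
  | isolated h => exact fun _ _ => CapturedIn.isolated h
  | cut e he h ih =>
    intro m' hm'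
    match m', hm' with
    | m' + 1, hm' =>
      exact CapturedIn.cut e he fun w hw => ih w hw m' (Nat.succ_le_succ_iff.mp hm')

theorem size_le_size_half_succ (m : ℕ) : Nat.size m ≤ Nat.size (m / 2) + 1 := by
  rw [Nat.size_le]
  have h1 : m / 2 < 2 ^ Nat.size (m / 2) := Nat.lt_size_self _
  have : m ≤ 2 * (m / 2) + 1 := by omega
  calc m ≤ 2 * (m / 2) + 1 := this
    _ < 2 * 2 ^ Nat.size (m / 2) := by omega
    _ = 2 ^ (Nat.size (m / 2) + 1) := by ring

theorem size_half_succ_le {m : ℕ} (hm : 1 ≤ m) : Nat.size (m / 2) + 1 ≤ Nat.size m := by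
  have h0 : 0 < Nat.size m := Nat.size_pos.mpr hm
  obtain ⟨s, hs⟩ : ∃ s, Nat.size m = s + 1 := ⟨Nat.size m - 1, by omega⟩
  rw [hs]
  have h1 : m < 2 ^ (s + 1) := by rw [← hs]; exact Nat.lt_size_self _
  have : m / 2 < 2 ^ s := by
    rw [pow_succ] at h1; omega
  exact Nat.succ_le_succ ((Nat.size_le).mpr this)

theorem size_le_size_pred_succ (m : ℕ) : Nat.size m ≤ Nat.size (m - 1) + 1 := by
  rcases Nat.eq_zero_or_pos m with h | h
  · simp [h]
  · calc Nat.size m ≤ Nat.size (m / 2) + 1 := size_le_size_half_succ m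
      _ ≤ Nat.size (m - 1) + 1 := by
        have : m / 2 ≤ m - 1 := by omega
        exact Nat.succ_le_succ (Nat.size_le_size this)

theorem clog_two_mul_eq {k : ℕ} (hk : 1 ≤ k) :
    Nat.clog 2 (2 * k) = Nat.size (k - 1) + 1 := by
  apply le_antisymm
  · rw [Nat.clog_le_iff_le_pow (by norm_num)]
    have : k - 1 < 2 ^ Nat.size (k - 1) := Nat.lt_size_self _
    rw [pow_succ]
    omega
  · have hc1 : 1 ≤ Nat.clog 2 (2 * k) := Nat.clog_pos (by norm_num) (by omega)
    have h2 : 2 * k ≤ 2 ^ Nat.clog 2 (2 * k) := Nat.le_pow_clog (by norm_num) _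
    obtain ⟨c', hc'⟩ : ∃ c', Nat.clog 2 (2 * k) = c' + 1 := ⟨_, (Nat.succ_pred_eq_of_pos hc1).symm⟩
    rw [hc'] at h2 ⊢
    have : k - 1 < 2 ^ c' := by
      rw [pow_succ] at h2; omega
    exact Nat.succ_le_succ (Nat.size_le.mpr this)

theorem min_le_half (q L : ℕ) : min q (L - q) ≤ L / 2 := by omega

variable {n : ℕ} [NeZero n]

theorem cast_inj' {q q' : ℕ} (hq : q < n) (hq' : q' < n) (h : (q : Fin n) = (q' : Fin n)) :
    q = q' := by
  have h2 := congrArg Fin.val h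
  rwa [Fin.val_natCast, Fin.val_natCast, Nat.mod_eq_of_lt hq, Nat.mod_eq_of_lt hq'] at h2

theorem addCast_inj {a : Fin n} {q q' : ℕ} (hq : q < n) (hq' : q' < n)
    (h : a + (q : Fin n) = a + (q' : Fin n)) : q = q' :=
  cast_inj' hq hq' (add_left_cancel h)

theorem addCast_add (a : Fin n) (i j : ℕ) :
    a + ((i + j : ℕ) : Fin n) = a + (i : Fin n) + (j : Fin n) := by
  push_cast; abel

theorem addCast_zero (a : Fin n) : a + ((0 : ℕ) : Fin n) = a := by push_cast; abel


variable {n : ℕ} [NeZero n]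

/-- x,y form a consecutive pair in the arc starting at `a` with `L` edges. -/
def arcAdj (a : Fin n) (L : ℕ) (x y : Fin n) : Prop :=
  ∃ j < L, (x = a + (j : Fin n) ∧ y = a + ((j + 1 : ℕ) : Fin n)) ∨
    (x = a + ((j + 1 : ℕ) : Fin n) ∧ y = a + (j : Fin n))

/-- Invariant: the cat's world is an arc `a, a+1, …, a+L` whose edges are all present,
and every `G`-edge touching an arc vertex is an arc edge. -/
def Conf (G : SimpleGraph (Fin n)) (a : Fin n) (L : ℕ) : Prop :=
  L < n ∧ (∀ q < L, G.Adj (a + (q : Fin n)) (a + ((q + 1 : ℕ) : Fin n))) ∧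
    (∀ x y, G.Adj x y → (∃ q ≤ L, x = a + (q : Fin n)) → arcAdj a L x y)

theorem cycle_adj_cases (hn : 3 ≤ n) {x y : Fin n} (h : (cycleGraph n).Adj x y) :
    y = x + ((1:ℕ):Fin n) ∨ x = y + ((1:ℕ):Fin n) := by
  rw [cycleGraph_adj'] at h
  rcases h with h | h
  · right
    have h2 : x - y = ((1:ℕ):Fin n) := by
      have := congrArg (Nat.cast : ℕ → Fin n) h
      rwa [Fin.cast_val_eq_self] at this
    rw [← h2]; abel
  · left
    have h2 : y - x = ((1:ℕ):Fin n) := by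
      have := congrArg (Nat.cast : ℕ → Fin n) h
      rwa [Fin.cast_val_eq_self] at this
    rw [← h2]; abel

theorem cycle_adj_succ (hn : 3 ≤ n) (x : Fin n) :
    (cycleGraph n).Adj x (x + ((1:ℕ):Fin n)) := by
  rw [cycleGraph_adj']
  right
  have h1 : x + ((1:ℕ):Fin n) - x = ((1:ℕ):Fin n) := by abel
  rw [h1, Fin.val_natCast, Nat.mod_eq_of_lt (by omega)]

/-- Walk confinement: a walk starting in the arc stays in the arc. -/
theorem walk_confine {G : SimpleGraph (Fin n)} {a : Fin n} {L : ℕ} (hL : L < n)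
    (H : ∀ x y, G.Adj x y → (∃ q ≤ L, x = a + (q : Fin n)) → arcAdj a L x y) :
    ∀ {u x : Fin n} (_ : G.Walk u x) (p : ℕ), p ≤ L → u = a + (p : Fin n) →
      ∃ q ≤ L, x = a + (q : Fin n) := by
  intro u x w
  induction w with
  | nil => exact fun p hp hu => ⟨p, hp, hu⟩
  | @cons u b x hadj w ih =>
    intro p hp hu
    obtain ⟨j, hj, hcase⟩ := H u b hadj ⟨p, hp, hu⟩
    rcases hcase with ⟨hx, hy⟩ | ⟨hx, hy⟩
    · have hjp : j = p := addCast_inj (by omega) (by omega) (hu ▸ hx.symm)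
      exact ih (p + 1) (by omega) (by rw [hy, hjp])
    · have hjp : j + 1 = p := addCast_inj (by omega) (by omega) (hu ▸ hx.symm)
      exact ih j (by omega) hy

theorem conf_reach_dest {G : SimpleGraph (Fin n)} {a : Fin n} {L : ℕ} (hC : Conf G a L)
    {p : ℕ} (hp : p ≤ L) {x : Fin n} (hr : G.Reachable (a + (p : Fin n)) x) :
    ∃ q ≤ L, x = a + (q : Fin n) := by
  obtain ⟨w⟩ := hr
  exact walk_confine hC.1 hC.2.2 w p hp rfl

theorem arc_reach_zero {G : SimpleGraph (Fin n)} {a : Fin n} {L : ℕ}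
    (hadj : ∀ q < L, G.Adj (a + (q : Fin n)) (a + ((q + 1 : ℕ) : Fin n))) :
    ∀ q ≤ L, G.Reachable a (a + (q : Fin n)) := by
  intro q
  induction q with
  | zero =>
    intro _
    rw [addCast_zero]
  | succ q ih =>
    intro hq
    exact (ih (by omega)).trans (hadj q (by omega)).reachable

theorem arc_reach {G : SimpleGraph (Fin n)} {a : Fin n} {L : ℕ}
    (hadj : ∀ q < L, G.Adj (a + (q : Fin n)) (a + ((q + 1 : ℕ) : Fin n)))
    {p q : ℕ} (hp : p ≤ L) (hq : q ≤ L) :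
    G.Reachable (a + (p : Fin n)) (a + (q : Fin n)) :=
  (arc_reach_zero hadj p hp).symm.trans (arc_reach_zero hadj q hq)


theorem arc_ne {a : Fin n} {L q j : ℕ} (hL : L < n) (hq : q < L) (hj : j < L) (hne : q ≠ j) :
    s(a + (q : Fin n), a + ((q + 1 : ℕ) : Fin n)) ≠ s(a + (j : Fin n), a + ((j + 1 : ℕ) : Fin n)) := by
  intro h
  rw [Sym2.eq_iff] at h
  rcases h with ⟨h1, h2⟩ | ⟨h1, h2⟩
  · exact hne (addCast_inj (by omega) (by omega) h1)
  · have e1 : q = j + 1 := addCast_inj (by omega) (by omega) h1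
    have e2 : q + 1 = j := addCast_inj (by omega) (by omega) h2
    omega

theorem conf_edge_cases {G : SimpleGraph (Fin n)} {a : Fin n} {L : ℕ} (hC : Conf G a L)
    {e : Sym2 (Fin n)} (he : e ∈ G.edgeSet) :
    (∃ j < L, e = s(a + (j : Fin n), a + ((j + 1 : ℕ) : Fin n))) ∨
      (∀ q ≤ L, (a + (q : Fin n)) ∉ e) := by
  induction e using Sym2.ind with
  | _ x y =>
    rw [SimpleGraph.mem_edgeSet] at he
    by_cases hx : ∃ q ≤ L, x = a + (q : Fin n)
    · obtain ⟨j, hj, hcase⟩ := hC.2.2 x y he hx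
      refine Or.inl ⟨j, hj, ?_⟩
      rcases hcase with ⟨h1, h2⟩ | ⟨h1, h2⟩
      · rw [h1, h2]
      · rw [h1, h2, Sym2.eq_swap]
    · by_cases hy : ∃ q ≤ L, y = a + (q : Fin n)
      · obtain ⟨j, hj, hcase⟩ := hC.2.2 y x he.symm hy
        refine Or.inl ⟨j, hj, ?_⟩
        rcases hcase with ⟨h1, h2⟩ | ⟨h1, h2⟩
        · rw [h1, h2, Sym2.eq_swap]
        · rw [h1, h2]
      · right
        intro q hq hmem
        rw [Sym2.mem_iff] at hmem
        rcases hmem with h | h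
        · exact hx ⟨q, hq, h.symm⟩
        · exact hy ⟨q, hq, h.symm⟩

theorem conf_delete_outside {G : SimpleGraph (Fin n)} {a : Fin n} {L : ℕ} (hC : Conf G a L)
    {e : Sym2 (Fin n)} (hout : ∀ q ≤ L, (a + (q : Fin n)) ∉ e) :
    Conf (G.deleteEdges {e}) a L := by
  obtain ⟨hLn, harc, hH⟩ := hC
  refine ⟨hLn, fun q hq => ?_, fun x y hxy hx => ?_⟩
  · rw [SimpleGraph.deleteEdges_adj]
    refine ⟨harc q hq, ?_⟩
    rw [Set.mem_singleton_iff]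
    intro h
    exact hout q (by omega) (h ▸ Sym2.mem_mk_left _ _)
  · rw [SimpleGraph.deleteEdges_adj] at hxy
    exact hH x y hxy.1 hx

theorem conf_delete_left {G : SimpleGraph (Fin n)} {a : Fin n} {L j : ℕ} (hC : Conf G a L)
    (hj : j < L) :
    Conf (G.deleteEdges {s(a + (j : Fin n), a + ((j + 1 : ℕ) : Fin n))}) a j := by
  obtain ⟨hLn, harc, hH⟩ := hC
  refine ⟨by omega, fun q hq => ?_, fun x y hxy hx => ?_⟩
  · rw [SimpleGraph.deleteEdges_adj]
    refine ⟨harc q (by omega), ?_⟩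
    rw [Set.mem_singleton_iff]
    exact arc_ne hLn (by omega) hj (by omega)
  · rw [SimpleGraph.deleteEdges_adj, Set.mem_singleton_iff] at hxy
    obtain ⟨q, hq, hxq⟩ := hx
    obtain ⟨j', hj', hcase⟩ := hH x y hxy.1 ⟨q, by omega, hxq⟩
    rcases hcase with ⟨h1, h2⟩ | ⟨h1, h2⟩
    · have hjq : q = j' := addCast_inj (by omega) (by omega) (hxq.symm.trans h1)
      have hne : j' ≠ j := by
        intro hh
        exact hxy.2 (by rw [h1, h2, hh])
      exact ⟨j', by omega, Or.inl ⟨h1, h2⟩⟩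
    · have hjq : q = j' + 1 := addCast_inj (by omega) (by omega) (hxq.symm.trans h1)
      exact ⟨j', by omega, Or.inr ⟨h1, h2⟩⟩

theorem conf_delete_right {G : SimpleGraph (Fin n)} {a : Fin n} {L j : ℕ} (hC : Conf G a L)
    (hj : j < L) :
    Conf (G.deleteEdges {s(a + (j : Fin n), a + ((j + 1 : ℕ) : Fin n))})
      (a + ((j + 1 : ℕ) : Fin n)) (L - (j + 1)) := by
  obtain ⟨hLn, harc, hH⟩ := hC
  have key : ∀ i : ℕ, (a + ((j + 1 : ℕ) : Fin n)) + (i : Fin n) = a + ((j + 1 + i : ℕ) : Fin n) := by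
    intro i
    exact (addCast_add a (j + 1) i).symm
  refine ⟨by omega, fun q hq => ?_, fun x y hxy hx => ?_⟩
  · rw [SimpleGraph.deleteEdges_adj]
    constructor
    · rw [key q, key (q + 1), show j + 1 + (q + 1) = (j + 1 + q) + 1 from by omega]
      exact harc (j + 1 + q) (by omega)
    · rw [Set.mem_singleton_iff, key q, key (q + 1),
        show j + 1 + (q + 1) = (j + 1 + q) + 1 from by omega]
      exact arc_ne hLn (by omega) hj (by omega)
  · rw [SimpleGraph.deleteEdges_adj, Set.mem_singleton_iff] at hxy
    obtain ⟨q, hq, hxq⟩ := hx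
    rw [key q] at hxq
    obtain ⟨j', hj', hcase⟩ := hH x y hxy.1 ⟨j + 1 + q, by omega, hxq⟩
    rcases hcase with ⟨h1, h2⟩ | ⟨h1, h2⟩
    · have hjq : j + 1 + q = j' := addCast_inj (by omega) (by omega) (hxq.symm.trans h1)
      obtain ⟨i', rfl⟩ : ∃ i', j' = j + 1 + i' := ⟨q, hjq.symm⟩
      refine ⟨i', by omega, Or.inl ⟨?_, ?_⟩⟩
      · rw [h1, key]
      · rw [h2, key, show j + 1 + (i' + 1) = j + 1 + i' + 1 from by omega]
    · have hjq : j + 1 + q = j' + 1 := addCast_inj (by omega) (by omega) (hxq.symm.trans h1)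
      have hne : j' ≠ j := by
        intro hh
        exact hxy.2 (by rw [h1, h2, hh, Sym2.eq_swap])
      obtain ⟨i', rfl⟩ : ∃ i', j' = j + 1 + i' := ⟨j' - (j + 1), by omega⟩
      refine ⟨i', by omega, Or.inr ⟨?_, ?_⟩⟩
      · rw [h1, key, show j + 1 + (i' + 1) = j + 1 + i' + 1 from by omega]
      · rw [h2, key]

theorem capture_arc (L : ℕ) :
    ∀ (G : SimpleGraph (Fin n)) (a : Fin n) (p : ℕ), Conf G a L → p ≤ L →
      CapturedIn G (a + (p : Fin n)) (Nat.size (min p (L - p)) + 1) := by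
  induction L using Nat.strong_induction_on with
  | _ L ih =>
    intro G a p hC hp
    rcases Nat.eq_zero_or_pos L with hL0 | hL1
    · subst hL0
      have hp0 : p = 0 := by omega
      subst hp0
      apply CapturedIn.isolated
      intro w hw
      obtain ⟨j, hj, _⟩ := hC.2.2 _ w hw ⟨0, le_refl 0, rfl⟩
      omega
    · by_cases hside : p ≤ L - p
      · -- cut the edge just to the right of the cat
        have hpL : p < L := by omega
        have hadj : G.Adj (a + (p : Fin n)) (a + ((p + 1 : ℕ) : Fin n)) := hC.2.1 p hpL
        have hmin : min p (L - p) = p := by omega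
        rw [hmin]
        apply CapturedIn.cut s(a + (p : Fin n), a + ((p + 1 : ℕ) : Fin n))
          ((SimpleGraph.mem_edgeSet _).mpr hadj)
        intro w hw
        have hC' : Conf (G.deleteEdges {s(a + (p : Fin n), a + ((p + 1 : ℕ) : Fin n))}) a p :=
          conf_delete_left hC hpL
        obtain ⟨hne, hr⟩ := hw
        obtain ⟨q, hq, rfl⟩ := conf_reach_dest hC' (le_refl p) hr
        have hqp : q ≠ p := fun h => hne (by rw [h])
        have hp1 : 1 ≤ p := by omega
        have hcap := ih p hpL _ a q hC' hq
        apply capturedIn_mono hcap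
        calc Nat.size (min q (p - q)) + 1 ≤ Nat.size (p / 2) + 1 :=
              Nat.succ_le_succ (Nat.size_le_size (min_le_half q p))
          _ ≤ Nat.size p := size_half_succ_le hp1
      · -- cut the edge just to the left of the cat
        obtain ⟨p', rfl⟩ : ∃ p', p = p' + 1 := ⟨p - 1, by omega⟩
        have hpL : p' < L := by omega
        have hadj : G.Adj (a + (p' : Fin n)) (a + ((p' + 1 : ℕ) : Fin n)) := hC.2.1 p' hpL
        have hmin : min (p' + 1) (L - (p' + 1)) = L - (p' + 1) := by omega
        rw [hmin]
        apply CapturedIn.cut s(a + (p' : Fin n), a + ((p' + 1 : ℕ) : Fin n))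
          ((SimpleGraph.mem_edgeSet _).mpr hadj)
        intro w hw
        set M := L - (p' + 1) with hM
        have hC' : Conf (G.deleteEdges {s(a + (p' : Fin n), a + ((p' + 1 : ℕ) : Fin n))})
            (a + ((p' + 1 : ℕ) : Fin n)) M := conf_delete_right hC hpL
        obtain ⟨hne, hr⟩ := hw
        have hr0 : (G.deleteEdges {s(a + (p' : Fin n), a + ((p' + 1 : ℕ) : Fin n))}).Reachable
            ((a + ((p' + 1 : ℕ) : Fin n)) + ((0 : ℕ) : Fin n)) w := by
          rw [addCast_zero]; exact hr
        obtain ⟨q, hq, rfl⟩ := conf_reach_dest hC' (Nat.zero_le M) hr0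
        have hq0 : q ≠ 0 := by
          intro h
          subst h
          exact hne (addCast_zero _).symm
        have hM1 : 1 ≤ M := by omega
        have hML : M < L := by omega
        have hcap := ih M hML _ _ q hC' hq
        apply capturedIn_mono hcap
        calc Nat.size (min q (M - q)) + 1 ≤ Nat.size (M / 2) + 1 :=
              Nat.succ_le_succ (Nat.size_le_size (min_le_half q M))
          _ ≤ Nat.size M := size_half_succ_le hM1


theorem cat_choice {L p m : ℕ} (hL : 1 ≤ L) (hp : p ≤ L) (hm : 1 ≤ m)
    (hmax : m ≤ max p (L - p)) :
    ∃ q ≤ L, q ≠ p ∧ Nat.size m ≤ Nat.size (min q (L - q)) + 1 := by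
  have hmL : m ≤ L := by omega
  by_cases h1 : p = L / 2
  · by_cases h2 : L - L / 2 = L / 2
    · -- L even, cat exactly in the middle; here m ≤ L/2
      have hm2 : m ≤ L / 2 := by omega
      refine ⟨L / 2 - 1, by omega, by omega, ?_⟩
      have hminq : min (L / 2 - 1) (L - (L / 2 - 1)) = L / 2 - 1 := by omega
      rw [hminq]
      calc Nat.size m ≤ Nat.size (m - 1) + 1 := size_le_size_pred_succ m
        _ ≤ Nat.size (L / 2 - 1) + 1 := Nat.succ_le_succ (Nat.size_le_size (by omega))
    · refine ⟨L - L / 2, by omega, by omega, ?_⟩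
      have hminq : min (L - L / 2) (L - (L - L / 2)) = L / 2 := by omega
      rw [hminq]
      calc Nat.size m ≤ Nat.size (m / 2) + 1 := size_le_size_half_succ m
        _ ≤ Nat.size (L / 2) + 1 := Nat.succ_le_succ (Nat.size_le_size (by omega))
  · refine ⟨L / 2, by omega, fun h => h1 h.symm, ?_⟩
    have hminq : min (L / 2) (L - L / 2) = L / 2 := by omega
    rw [hminq]
    calc Nat.size m ≤ Nat.size (m / 2) + 1 := size_le_size_half_succ m
      _ ≤ Nat.size (L / 2) + 1 := Nat.succ_le_succ (Nat.size_le_size (by omega))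

theorem conf_not_isolated {G : SimpleGraph (Fin n)} {a : Fin n} {L p : ℕ}
    (hC : Conf G a L) (hL : 1 ≤ L) (hp : p ≤ L) :
    ∃ w, G.Adj (a + (p : Fin n)) w := by
  rcases Nat.lt_or_ge p L with h | h
  · exact ⟨_, hC.2.1 p h⟩
  · obtain ⟨L', rfl⟩ : ∃ L', L = L' + 1 := ⟨L - 1, by omega⟩
    have hpL : p = L' + 1 := by omega
    subst hpL
    exact ⟨_, (hC.2.1 L' (by omega)).symm⟩

theorem lower_arc : ∀ (t : ℕ) (G : SimpleGraph (Fin n)) (a : Fin n) (L p : ℕ),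
    Conf G a L → 1 ≤ L → p ≤ L → CapturedIn G (a + (p : Fin n)) t →
    Nat.size (min p (L - p)) + 1 ≤ t := by
  intro t
  induction t with
  | zero =>
    intro G a L p hC hL hp hcap
    cases hcap with
    | isolated h =>
      obtain ⟨w, hw⟩ := conf_not_isolated hC hL hp
      exact absurd hw (h w)
  | succ t iht =>
    intro G a L p hC hL hp hcap
    cases hcap with
    | isolated h =>
      obtain ⟨w, hw⟩ := conf_not_isolated hC hL hp
      exact absurd hw (h w)
    | cut e he hstep =>
      have hLn : L < n := hC.1
      rcases Nat.eq_zero_or_pos (min p (L - p)) with hm0 | hm1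
      · rw [hm0, Nat.size_zero]
        omega
      · rcases conf_edge_cases hC he with ⟨j, hj, rfl⟩ | hout
        · by_cases hpj : p ≤ j
          · -- cat is on the left of the cut
            have hC' := conf_delete_left hC hj
            have hj1 : 1 ≤ j := by omega
            obtain ⟨q, hq, hqp, hsz⟩ := cat_choice hj1 hpj hm1 (by omega)
            have hmove : CatMove
                (G.deleteEdges {s(a + (j : Fin n), a + ((j + 1 : ℕ) : Fin n))})
                (a + (p : Fin n)) (a + (q : Fin n)) := by
              refine ⟨fun h => hqp (addCast_inj (by omega) (by omega) h.symm), ?_⟩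
              exact arc_reach hC'.2.1 hpj hq
            have hrec := iht _ a j q hC' hj1 hq (hstep _ hmove)
            omega
          · -- cat is on the right of the cut
            obtain ⟨p'', rfl⟩ : ∃ p'', p = (j + 1) + p'' := ⟨p - (j + 1), by omega⟩
            have hC' := conf_delete_right hC hj
            have hM1 : 1 ≤ L - (j + 1) := by omega
            have hp' : p'' ≤ L - (j + 1) := by omega
            obtain ⟨q, hq, hqp, hsz⟩ := cat_choice hM1 hp' hm1 (by omega)
            have hpos : a + ((j + 1 + p'' : ℕ) : Fin n) =
                (a + ((j + 1 : ℕ) : Fin n)) + ((p'' : ℕ) : Fin n) := addCast_add a (j + 1) p''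
            have hmove : CatMove
                (G.deleteEdges {s(a + (j : Fin n), a + ((j + 1 : ℕ) : Fin n))})
                (a + ((j + 1 + p'' : ℕ) : Fin n)) ((a + ((j + 1 : ℕ) : Fin n)) + (q : Fin n)) := by
              constructor
              · rw [hpos]
                exact fun h => hqp (addCast_inj (by omega) (by omega) h.symm)
              · rw [hpos]
                exact arc_reach hC'.2.1 hp' hq
            have hrec := iht _ _ (L - (j + 1)) q hC' hM1 hq (hstep _ hmove)
            omega
        · -- cut away from the cat's arc
          have hC' := conf_delete_outside hC hout
          obtain ⟨q, hq, hqp, hsz⟩ := cat_choice hL hp hm1 (by omega)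
          have hmove : CatMove (G.deleteEdges {e}) (a + (p : Fin n)) (a + (q : Fin n)) := by
            refine ⟨fun h => hqp (addCast_inj (by omega) (by omega) h.symm), ?_⟩
            exact arc_reach hC'.2.1 hp hq
          have hrec := iht _ a L q hC' hL hq (hstep _ hmove)
          omega


theorem addCast_cancel (x : Fin n) {i j : ℕ} (h : i + j = n) :
    x + (i : Fin n) + (j : Fin n) = x := by
  rw [← addCast_add, h, Fin.natCast_self, add_zero]

theorem conf_cycle_delete (hn : 3 ≤ n) (u : Fin n) :
    Conf ((cycleGraph n).deleteEdges {s(u, u + ((1:ℕ):Fin n))}) (u + ((1:ℕ):Fin n)) (n - 1) := by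
  set a := u + ((1:ℕ):Fin n) with ha
  have hu : a + ((n - 1 : ℕ) : Fin n) = u := by
    rw [ha, add_assoc]
    have : ((1:ℕ):Fin n) + ((n - 1 : ℕ) : Fin n) = ((0:ℕ):Fin n) := by
      rw [← Nat.cast_add, show 1 + (n - 1) = n from by omega, Fin.natCast_self, Nat.cast_zero]
    rw [this, Nat.cast_zero, add_zero]
  have hsucc : ∀ q : ℕ, a + ((q + 1 : ℕ) : Fin n) = (a + (q : Fin n)) + ((1:ℕ):Fin n) :=
    fun q => addCast_add a q 1
  refine ⟨by omega, fun q hq => ?_, fun x y hxy hx => ?_⟩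
  · rw [SimpleGraph.deleteEdges_adj]
    constructor
    · rw [hsucc q]
      exact cycle_adj_succ hn _
    · rw [Set.mem_singleton_iff]
      intro h
      rw [Sym2.eq_iff] at h
      rcases h with ⟨h1, h2⟩ | ⟨h1, h2⟩
      · rw [← hu] at h1
        have := addCast_inj (by omega) (by omega) h1
        omega
      · rw [← hu] at h2
        have e1 := addCast_inj (by omega) (by omega) h2
        have h1' : a + ((q : ℕ) : Fin n) = a + ((0:ℕ):Fin n) := by
          rw [addCast_zero]; exact h1
        have e2 := addCast_inj (by omega) (by omega) h1'
        omega
  · rw [SimpleGraph.deleteEdges_adj, Set.mem_singleton_iff] at hxy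
    obtain ⟨q, hq, rfl⟩ := hx
    rcases cycle_adj_cases hn hxy.1 with hy | hy
    · rcases Nat.lt_or_ge q (n - 1) with h | h
      · exact ⟨q, h, Or.inl ⟨rfl, by rw [hsucc q, ← hy]⟩⟩
      · exfalso
        have hq' : q = n - 1 := by omega
        subst hq'
        apply hxy.2
        rw [hu, hy, hu]
    · rcases Nat.eq_zero_or_pos q with h | h
      · exfalso
        subst h
        apply hxy.2
        have hya : y = u := by
          apply add_right_cancel (b := ((1:ℕ):Fin n))
          rw [← hy, ha, addCast_zero]
        rw [hya, hy, hya, Sym2.eq_swap]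
      · refine ⟨q - 1, by omega, Or.inr ⟨?_, ?_⟩⟩
        · rw [show q - 1 + 1 = q from by omega]
        · apply add_right_cancel (b := ((1:ℕ):Fin n))
          rw [← hy, ← hsucc (q - 1), show q - 1 + 1 = q from by omega]

theorem cycle_edge (hn : 3 ≤ n) {e : Sym2 (Fin n)} (he : e ∈ (cycleGraph n).edgeSet) :
    ∃ u : Fin n, e = s(u, u + ((1:ℕ):Fin n)) := by
  induction e using Sym2.ind with
  | _ x y =>
    rw [SimpleGraph.mem_edgeSet] at he
    rcases cycle_adj_cases hn he with hy | hy
    · exact ⟨x, by rw [hy]⟩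
    · exact ⟨y, by rw [hy, Sym2.eq_swap]⟩

theorem capture_cycle (hn : 3 ≤ n) (v : Fin n) :
    CapturedIn (cycleGraph n) v (Nat.size (n / 2 - 1) + 2) := by
  set k := n / 2 with hk
  have hk1 : 1 ≤ k := by omega
  have he : s(v + ((k:ℕ):Fin n), v + ((k:ℕ):Fin n) + ((1:ℕ):Fin n)) ∈ (cycleGraph n).edgeSet :=
    (SimpleGraph.mem_edgeSet _).mpr (cycle_adj_succ hn _)
  have hC' := conf_cycle_delete hn (v + ((k:ℕ):Fin n))
  set a := v + ((k:ℕ):Fin n) + ((1:ℕ):Fin n) with ha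
  have hveq : a + ((n - 1 - k : ℕ) : Fin n) = v := by
    rw [ha, ← addCast_add v k 1]
    exact addCast_cancel v (by omega)
  show CapturedIn (cycleGraph n) v ((Nat.size (k - 1) + 1) + 1)
  apply CapturedIn.cut _ he
  intro w hw
  obtain ⟨hne, hr⟩ := hw
  have hr' : ((cycleGraph n).deleteEdges
      {s(v + ((k:ℕ):Fin n), v + ((k:ℕ):Fin n) + ((1:ℕ):Fin n))}).Reachable
      (a + ((n - 1 - k : ℕ) : Fin n)) w := by
    rw [hveq]; exact hr
  obtain ⟨q, hq, rfl⟩ := conf_reach_dest hC' (show n - 1 - k ≤ n - 1 from by omega) hr'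
  have hqne : q ≠ n - 1 - k := by
    intro h
    subst h
    exact hne (by rw [hveq])
  have hcap := capture_arc (n - 1) _ a q hC' hq
  apply capturedIn_mono hcap
  have hmin : min q (n - 1 - q) ≤ k - 1 := by omega
  have := Nat.size_le_size hmin
  omega

theorem not_capture_cycle (hn : 3 ≤ n) (v : Fin n) :
    ¬ CapturedIn (cycleGraph n) v (Nat.size (n / 2 - 1) + 1) := by
  set k := n / 2 with hk
  have hk1 : 1 ≤ k := by omega
  intro hcap
  cases hcap with
  | isolated h => exact h _ (cycle_adj_succ hn v)
  | cut e he hstep =>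
    obtain ⟨u, rfl⟩ := cycle_edge hn he
    have hC' := conf_cycle_delete hn u
    obtain ⟨p, hp, rfl⟩ : ∃ p ≤ n - 1, v = (u + ((1:ℕ):Fin n)) + (p : Fin n) := by
      refine ⟨(v - (u + ((1:ℕ):Fin n))).val, by omega, ?_⟩
      rw [Fin.cast_val_eq_self]
      abel
    set a := u + ((1:ℕ):Fin n) with ha
    -- the cat's response
    have hchoice : ∃ q ≤ n - 1, q ≠ p ∧ k - 1 ≤ min q (n - 1 - q) := by
      by_cases hpk : p = k
      · exact ⟨k - 1, by omega, by omega, by omega⟩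
      · exact ⟨k, by omega, fun h => hpk h.symm, by omega⟩
    obtain ⟨q, hq, hqp, hqmin⟩ := hchoice
    have hmove : CatMove ((cycleGraph n).deleteEdges {s(u, u + ((1:ℕ):Fin n))})
        (a + (p : Fin n)) (a + (q : Fin n)) := by
      refine ⟨fun h => hqp (addCast_inj (by omega) (by omega) h.symm), ?_⟩
      exact arc_reach hC'.2.1 hp hq
    have hcap' := hstep _ hmove
    have hlow := lower_arc _ _ a (n - 1) q hC' (by omega) hq hcap'
    have hsz := Nat.size_le_size hqmin
    omega


end CatProof

/-- For `n ≥ 3`, `cat(C_n) = ⌈log₂ (2⌊n/2⌋)⌉ + 1`. -/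
theorem catNum_cycleGraph (n : ℕ) (hn : 3 ≤ n) :
    catNum (SimpleGraph.cycleGraph n) = ((Nat.clog 2 (2 * (n / 2)) + 1 : ℕ) : ℕ∞) := by
  haveI : NeZero n := ⟨by omega⟩
  haveI : Nonempty (Fin n) := ⟨⟨0, by omega⟩⟩
  have hk : 1 ≤ n / 2 := by omega
  have hval : Nat.clog 2 (2 * (n / 2)) + 1 = Nat.size (n / 2 - 1) + 2 := by
    rw [CatProof.clog_two_mul_eq hk]
  rw [hval]
  have hv : ∀ v : Fin n, catVNum (SimpleGraph.cycleGraph n) v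
      = ((Nat.size (n / 2 - 1) + 2 : ℕ) : ℕ∞) := by
    intro v
    apply le_antisymm
    · exact sInf_le ⟨Nat.size (n / 2 - 1) + 2, CatProof.capture_cycle hn v, rfl⟩
    · apply le_sInf
      rintro b ⟨m, hm, rfl⟩
      rw [Nat.cast_le]
      by_contra hlt
      push_neg at hlt
      exact CatProof.not_capture_cycle hn v
        (CatProof.capturedIn_mono hm (Nat.size (n / 2 - 1) + 1) (by omega))
  show (⨆ v, catVNum (SimpleGraph.cycleGraph n) v) = _
  simp only [hv]
  exact iSup_const
end

section
/- Let G be a connected graph with at least one edge. For every vertex v of G, deg(v) = 1 if and only if cat(G, v) = 1. -/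
open SimpleGraph

universe u

lemma exists_adj_aux {V : Type u} {G : SimpleGraph V} (hc : G.Connected)
    (he : G.edgeSet.Nonempty) (v : V) : ∃ a, G.Adj v a := by
  obtain ⟨e, he⟩ := he
  induction e using Sym2.ind with
  | _ x y =>
    rw [SimpleGraph.mem_edgeSet] at he
    obtain ⟨p⟩ := hc.preconnected v x
    cases p with
    | nil => exact ⟨y, he⟩
    | cons h _ => exact ⟨_, h⟩

lemma reachable_eq_of_isolated_aux {V : Type u} {G : SimpleGraph V} {v w : V}
    (h : ∀ u, ¬ G.Adj v u) (hr : G.Reachable v w) : w = v := by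
  obtain ⟨p⟩ := hr
  cases p with
  | nil => rfl
  | cons ha _ => exact absurd ha (h _)

lemma capturedIn_zero_aux {V : Type u} {G : SimpleGraph V} {v : V}
    (h : CapturedIn G v 0) : ∀ w, ¬ G.Adj v w := by
  cases h with
  | isolated h => exact h

/-- In a connected graph with at least one edge, a vertex has
degree 1 iff its cat number is 1. -/
theorem degOne_iff_catVNum_eq_one {V : Type u} (G : SimpleGraph V)
    (hc : G.Connected) (he : G.edgeSet.Nonempty) (v : V) :
    DegOne G v ↔ catVNum G v = 1 := by
  obtain ⟨a0, ha0⟩ := exists_adj_aux hc he v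
  constructor
  · rintro ⟨a, ha⟩
    have hadj : G.Adj v a := by
      have : a ∈ G.neighborSet v := by rw [ha]; rfl
      exact this
    have hcap : CapturedIn G v 1 := by
      apply CapturedIn.cut (s(v, a)) (by rwa [SimpleGraph.mem_edgeSet])
      intro w hw
      exfalso
      have hiso : ∀ u, ¬ (G.deleteEdges {s(v, a)}).Adj v u := by
        intro u hu
        rw [SimpleGraph.deleteEdges_adj] at hu
        have hua : u = a := by
          have : u ∈ G.neighborSet v := hu.1
          rw [ha] at this
          exact this
        exact hu.2 (by rw [hua]; rfl)
      exact hw.1 ((reachable_eq_of_isolated_aux hiso hw.2).symm)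
    refine le_antisymm (sInf_le ⟨1, hcap, by simp⟩) (le_sInf ?_)
    rintro x ⟨m, hm, rfl⟩
    rcases Nat.eq_zero_or_pos m with h0 | h1
    · subst h0
      exact absurd hadj (capturedIn_zero_aux hm a)
    · exact_mod_cast h1
  · intro h
    have hlt : sInf (Nat.cast '' {m : ℕ | CapturedIn G v m}) < (2 : ℕ∞) := by
      rw [show sInf (Nat.cast '' {m : ℕ | CapturedIn G v m}) = catVNum G v from rfl, h]
      norm_num
    obtain ⟨x, ⟨m, hm, rfl⟩, hx2⟩ := sInf_lt_iff.mp hlt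
    have hm2 : m < 2 := by exact_mod_cast hx2
    interval_cases m
    · exact absurd ha0 (capturedIn_zero_aux hm a0)
    · cases hm with
      | isolated hiso => exact absurd ha0 (hiso a0)
      | cut e hee hcut =>
        refine ⟨a0, ?_⟩
        ext w
        simp only [SimpleGraph.mem_neighborSet, Set.mem_singleton_iff]
        constructor
        · intro hw
          by_contra hwa
          -- find a neighbor c of v surviving the deletion of e
          have hkey : ∀ c, (G.deleteEdges {e}).Adj v c → False := by
            intro c hcadj
            have hcm : CatMove (G.deleteEdges {e}) v c := ⟨hcadj.ne, hcadj.reachable⟩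
            have := capturedIn_zero_aux (hcut c hcm) v
            exact this hcadj.symm
          rcases eq_or_ne (s(v, a0)) e with heq | hne
          · -- then s(v, w) ≠ e
            have hsw : s(v, w) ≠ e := by
              intro hsweq
              rw [← heq] at hsweq
              rcases Sym2.eq_iff.mp hsweq with ⟨_, h2⟩ | ⟨h1, _⟩
              · exact hwa h2
              · exact (G.irrefl (h1 ▸ ha0))
            exact hkey w (by rw [SimpleGraph.deleteEdges_adj]; exact ⟨hw, by simpa using hsw⟩)
          · exact hkey a0 (by rw [SimpleGraph.deleteEdges_adj]; exact ⟨ha0, by simpa using hne⟩)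
        · rintro rfl; exact ha0
end

section
/- Let G be a connected graph with vertices u, v where deg(u) ≥ 2, uv is an edge, and deg(v) = 1. Let G_v be obtained from G by adding a new vertex x and the edge ux. Then cat(G, a) = cat(G_v, a) for all vertices a of G, and cat(G_v, x) = 1; in particular cat(G_v) = cat(G). -/
open SimpleGraph

universe u

/-- `G` with a new vertex (`none`) joined to `u` by an edge. -/
def addLeaf {V : Type u} (G : SimpleGraph V) (u : V) : SimpleGraph (Option V) :=
  SimpleGraph.fromRel (fun a b =>
    (∃ x y, a = some x ∧ b = some y ∧ G.Adj x y) ∨ (a = some u ∧ b = none))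

/-! ### Auxiliary development for Statement 6 -/

section CatAux

variable {V : Type u}

theorem delAdj {M : SimpleGraph V} {e : Sym2 V} {a b : V} :
    (M.deleteEdges {e}).Adj a b ↔ M.Adj a b ∧ s(a, b) ≠ e := by
  rw [SimpleGraph.deleteEdges_adj, Set.mem_singleton_iff]

theorem capIsolatedOfZero {M : SimpleGraph V} {p : V} (h : CapturedIn M p 0) :
    ∀ w, ¬ M.Adj p w := by
  cases h with
  | isolated h => exact h

theorem oneLeOfCap {M : SimpleGraph V} {p w : V} {n : ℕ} (h : CapturedIn M p n)
    (hadj : M.Adj p w) : 1 ≤ n := by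
  cases h with
  | isolated h => exact absurd hadj (h w)
  | cut e he h => omega

theorem reachEqOfIsolated {M : SimpleGraph V} {p z : V}
    (h : ∀ w, ¬ M.Adj p w) (hr : M.Reachable p z) : z = p := by
  obtain ⟨w⟩ := hr
  cases w with
  | nil => rfl
  | cons hadj _ => exact absurd hadj (h _)

theorem pseudoReach {W : Type*} (f : V → W) {H : SimpleGraph V} {H' : SimpleGraph W}
    (hf : ∀ a b, H.Adj a b → H'.Adj (f a) (f b) ∨ f a = f b) {a b : V}
    (h : H.Reachable a b) : H'.Reachable (f a) (f b) := by
  obtain ⟨w⟩ := h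
  induction w with
  | nil => exact SimpleGraph.Reachable.refl _
  | cons hadj p ih =>
      rcases hf _ _ hadj with h' | h'
      · exact h'.reachable.trans ih
      · rwa [h']

/-- Monotonicity of capture under injective graph homomorphisms (from the smaller
graph into the bigger): if the herder can capture in the bigger graph, he can
capture in the smaller one. -/
theorem homCap {W : Type*} (f : V → W) (hf : Function.Injective f)
    {H' : SimpleGraph W} {q : W} {n : ℕ} (h : CapturedIn H' q n) :
    ∀ (H : SimpleGraph V) (p : V), f p = q →
      (∀ a b, H.Adj a b → H'.Adj (f a) (f b)) → CapturedIn H p n := by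
  induction h with
  | @isolated G' q n hiso =>
      intro H p hpq hhom
      exact CapturedIn.isolated fun w hw => hiso (f w) (hpq ▸ hhom _ _ hw)
  | @cut G' q n e he hbr ih =>
      intro H p hpq hhom
      by_cases hpre : ∃ g ∈ H.edgeSet, Sym2.map f g = e
      · obtain ⟨g, hg, hge⟩ := hpre
        refine CapturedIn.cut g hg fun w hw => ?_
        have hom' : ∀ a b, (H.deleteEdges {g}).Adj a b →
            (G'.deleteEdges {e}).Adj (f a) (f b) := by
          intro a b hab
          obtain ⟨hab1, hab2⟩ := delAdj.mp hab
          refine delAdj.mpr ⟨hhom _ _ hab1, fun hmem => hab2 ?_⟩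
          apply Sym2.map.injective hf
          rw [Sym2.map_pair_eq, hmem, hge]
        have hcm : CatMove (G'.deleteEdges {e}) q (f w) := by
          refine ⟨fun hfe => hw.1 (hf (hpq.trans hfe)), ?_⟩
          have : (G'.deleteEdges {e}).Reachable (f p) (f w) :=
            SimpleGraph.Reachable.map ⟨f, fun {a b} hab => hom' a b hab⟩ hw.2
          rwa [hpq] at this
        exact ih (f w) hcm _ w rfl hom'
      · by_cases hiso : ∀ w, ¬ H.Adj p w
        · exact CapturedIn.isolated hiso
        · push_neg at hiso
          obtain ⟨w₁, hw₁⟩ := hiso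
          refine CapturedIn.cut s(p, w₁) ((SimpleGraph.mem_edgeSet _).mpr hw₁) fun w hw => ?_
          have hom' : ∀ a b, (H.deleteEdges {s(p, w₁)}).Adj a b →
              (G'.deleteEdges {e}).Adj (f a) (f b) := by
            intro a b hab
            obtain ⟨hab1, hab2⟩ := delAdj.mp hab
            refine delAdj.mpr ⟨hhom _ _ hab1, fun hmem => ?_⟩
            exact hpre ⟨s(a, b), (SimpleGraph.mem_edgeSet _).mpr hab1,
              by rw [Sym2.map_pair_eq, hmem]⟩
          have hcm : CatMove (G'.deleteEdges {e}) q (f w) := by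
            refine ⟨fun hfe => hw.1 (hf (hpq.trans hfe)), ?_⟩
            have : (G'.deleteEdges {e}).Reachable (f p) (f w) :=
              SimpleGraph.Reachable.map ⟨f, fun {a b} hab => hom' a b hab⟩ hw.2
            rwa [hpq] at this
          exact ih (f w) hcm _ w rfl hom'

/-- Capture where, in addition, the herder keeps one cut in reserve whenever the
cat can still reach `u`.  This is exactly what is needed to also capture the cat
when a fresh pendant vertex is attached at `u`. -/
inductive CapPlus {V : Type u} (u : V) : SimpleGraph V → V → ℕ → Prop
  | isolated {G : SimpleGraph V} {v : V} {n : ℕ} (h : ∀ w, ¬ G.Adj v w)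
      (hc : G.Reachable v u → 1 ≤ n) : CapPlus u G v n
  | cut {G : SimpleGraph V} {v : V} {n : ℕ} (e : Sym2 V) (he : e ∈ G.edgeSet)
      (hc : (G.deleteEdges {e}).Reachable v u → 1 ≤ n)
      (h : ∀ w, CatMove (G.deleteEdges {e}) v w → CapPlus u (G.deleteEdges {e}) w n) :
      CapPlus u G v (n + 1)

theorem capPlusOfNotReach {u : V} {M : SimpleGraph V} {p : V} {n : ℕ}
    (h : CapturedIn M p n) : ¬ M.Reachable p u → CapPlus u M p n := by
  induction h with
  | isolated h => exact fun hnr => CapPlus.isolated h fun hr => absurd hr hnr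
  | cut e he hbr ih =>
      intro hnr
      refine CapPlus.cut e he
        (fun hr => absurd (hr.mono (SimpleGraph.deleteEdges_le _)) hnr) ?_
      intro w hw
      exact ih w hw fun hru =>
        hnr ((hw.2.trans hru).mono (SimpleGraph.deleteEdges_le _))

theorem capPlusLeaf {u v : V} {M : SimpleGraph V} (huv : M.Adj u v)
    (hpend : ∀ y, M.Adj v y → y = u) {n : ℕ} (hn : 1 ≤ n) : CapPlus u M v n := by
  obtain ⟨m, rfl⟩ : ∃ m, n = m + 1 := ⟨n - 1, by omega⟩
  have hiso : ∀ w, ¬ (M.deleteEdges {s(u, v)}).Adj v w := by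
    intro w hw
    obtain ⟨hw1, hw2⟩ := delAdj.mp hw
    have hwu := hpend w hw1
    subst w
    exact hw2 Sym2.eq_swap
  refine CapPlus.cut s(u, v) ((SimpleGraph.mem_edgeSet _).mpr huv) ?_ ?_
  · intro hr
    exact absurd (reachEqOfIsolated hiso hr) huv.ne
  · intro w hw
    exact absurd (reachEqOfIsolated hiso hw.2) (Ne.symm hw.1)

/-- The "exchange" graph: replace the edge `u w₀` (if present) by the pendant edge
`u v`. -/
def exch (u v w₀ : V) (M : SimpleGraph V) : SimpleGraph V where
  Adj a b := a ≠ b ∧ ((M.Adj a b ∧ s(a, b) ≠ s(u, w₀)) ∨ (M.Adj u w₀ ∧ s(a, b) = s(u, v)))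
  symm := by
    refine ⟨?_⟩
    rintro a b ⟨hne, h | h⟩
    · exact ⟨hne.symm, Or.inl ⟨h.1.symm, by rw [Sym2.eq_swap]; exact h.2⟩⟩
    · exact ⟨hne.symm, Or.inr ⟨h.1, by rw [Sym2.eq_swap]; exact h.2⟩⟩
  loopless := ⟨fun a h => h.1 rfl⟩

theorem exch_adj {u v w₀ : V} {M : SimpleGraph V} {a b : V} :
    (exch u v w₀ M).Adj a b ↔
      a ≠ b ∧ ((M.Adj a b ∧ s(a, b) ≠ s(u, w₀)) ∨ (M.Adj u w₀ ∧ s(a, b) = s(u, v))) :=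
  Iff.rfl

theorem exchEdgeMem {u v w₀ : V} {M : SimpleGraph V} {e : Sym2 V}
    (he : e ∈ M.edgeSet) (hne : e ≠ s(u, w₀)) : e ∈ (exch u v w₀ M).edgeSet := by
  induction e using Sym2.ind with
  | _ a b =>
    rw [SimpleGraph.mem_edgeSet] at he ⊢
    exact ⟨he.ne, Or.inl ⟨he, hne⟩⟩

theorem adjNeUv {u v : V} {M : SimpleGraph V} (hv : ∀ y, ¬ M.Adj v y)
    {a b : V} (h : M.Adj a b) : s(a, b) ≠ s(u, v) := by
  intro heq
  rw [Sym2.eq_iff] at heq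
  rcases heq with ⟨h1, h2⟩ | ⟨h1, h2⟩
  · rw [h1, h2] at h
    exact hv u h.symm
  · rw [h1, h2] at h
    exact hv u h

theorem exchDelNe {u v w₀ : V} {M : SimpleGraph V} (hv : ∀ y, ¬ M.Adj v y)
    {e : Sym2 V} (he : e ∈ M.edgeSet) (hne : e ≠ s(u, w₀)) :
    (exch u v w₀ M).deleteEdges {e} = exch u v w₀ (M.deleteEdges {e}) := by
  have heuv : e ≠ s(u, v) := by
    intro h
    induction e using Sym2.ind with
    | _ a b =>
      rw [SimpleGraph.mem_edgeSet] at he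
      exact adjNeUv hv he h
  ext a b
  rw [delAdj, exch_adj, exch_adj]
  constructor
  · rintro ⟨⟨hab, h | h⟩, hee⟩
    · exact ⟨hab, Or.inl ⟨delAdj.mpr ⟨h.1, hee⟩, h.2⟩⟩
    · refine ⟨hab, Or.inr ⟨delAdj.mpr ⟨h.1, fun hh => hne hh.symm⟩, h.2⟩⟩
  · rintro ⟨hab, ⟨h1, h3⟩ | ⟨h1, h3⟩⟩
    · obtain ⟨h1a, h1b⟩ := delAdj.mp h1
      exact ⟨⟨hab, Or.inl ⟨h1a, h3⟩⟩, h1b⟩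
    · obtain ⟨h1a, h1b⟩ := delAdj.mp h1
      exact ⟨⟨hab, Or.inr ⟨h1a, h3⟩⟩, fun hh => heuv (by rw [← hh, h3])⟩

theorem exchDelUw {u v w₀ : V} {M : SimpleGraph V} (hv : ∀ y, ¬ M.Adj v y) :
    (exch u v w₀ M).deleteEdges {s(u, v)} = exch u v w₀ (M.deleteEdges {s(u, w₀)}) := by
  ext a b
  rw [delAdj, exch_adj, exch_adj]
  constructor
  · rintro ⟨⟨hab, h | h⟩, hee⟩
    · exact ⟨hab, Or.inl ⟨delAdj.mpr ⟨h.1, h.2⟩, h.2⟩⟩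
    · exact absurd h.2 hee
  · rintro ⟨hab, ⟨h1, h3⟩ | ⟨h1, h3⟩⟩
    · obtain ⟨h1a, h1b⟩ := delAdj.mp h1
      exact ⟨⟨hab, Or.inl ⟨h1a, h3⟩⟩, adjNeUv hv h1a⟩
    · exact absurd rfl (delAdj.mp h1).2

open Classical in
theorem exchReachIte {u v w₀ : V} {M : SimpleGraph V} (hv : ∀ y, ¬ M.Adj v y)
    {a b : V} (h : (exch u v w₀ M).Reachable a b) :
    M.Reachable (if a = v then w₀ else a) (if b = v then w₀ else b) := by
  refine pseudoReach (fun z => if z = v then w₀ else z) ?_ h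
  intro x y hxy
  obtain ⟨hne, hd⟩ := exch_adj.mp hxy
  rcases hd with ⟨h1, -⟩ | ⟨h1, h2⟩
  · left
    have hxv : x ≠ v := fun hh => hv y (by rwa [hh] at h1)
    have hyv : y ≠ v := fun hh => hv x (by rw [hh] at h1; exact h1.symm)
    simp only [if_neg hxv, if_neg hyv]
    exact h1
  · left
    rw [Sym2.eq_iff] at h2
    rcases h2 with ⟨rfl, rfl⟩ | ⟨rfl, rfl⟩
    · simp only [if_neg hne, if_pos rfl]
      exact h1
    · simp only [if_pos rfl, if_neg (Ne.symm hne)]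
      exact h1.symm

theorem exchReachNe {u v w₀ : V} {M : SimpleGraph V} (hv : ∀ y, ¬ M.Adj v y)
    {a b : V} (hav : a ≠ v) (hbv : b ≠ v) (h : (exch u v w₀ M).Reachable a b) :
    M.Reachable a b := by
  have h2 := exchReachIte hv h
  rwa [if_neg hav, if_neg hbv] at h2

theorem exchReachV {u v w₀ : V} {M : SimpleGraph V} (hv : ∀ y, ¬ M.Adj v y)
    {a : V} (hav : a ≠ v) (h : (exch u v w₀ M).Reachable a v) :
    M.Reachable a w₀ := by
  have h2 := exchReachIte hv h
  rwa [if_neg hav, if_pos rfl] at h2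

/-- The exchange lemma: trading an edge at `u` for a pendant edge at `u` can only
help the herder. -/
theorem exchCap {u v w₀ : V} (huv : u ≠ v)
    {M : SimpleGraph V} {q : V} {n : ℕ} (h : CapturedIn M q n) :
    (∀ y, ¬ M.Adj v y) → q ≠ v → CapturedIn (exch u v w₀ M) q n := by
  induction h with
  | @isolated M q n hiso =>
      intro hv hq
      refine CapturedIn.isolated fun w hw => ?_
      obtain ⟨hne, hd⟩ := exch_adj.mp hw
      rcases hd with ⟨h1, -⟩ | ⟨h1, h2⟩
      · exact hiso w h1
      · rw [Sym2.eq_iff] at h2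
        rcases h2 with ⟨hq1, -⟩ | ⟨hq1, -⟩
        · rw [← hq1] at h1
          exact hiso w₀ h1
        · exact hq hq1
  | @cut M q n e he hbr ih =>
      intro hv hq
      have hv' : ∀ y, ¬ (M.deleteEdges {e}).Adj v y := fun y hy => hv y (delAdj.mp hy).1
      by_cases hew : e = s(u, w₀)
      · subst hew
        have huw : M.Adj u w₀ := (SimpleGraph.mem_edgeSet _).mp he
        have hadjuv : (exch u v w₀ M).Adj u v := ⟨huv, Or.inr ⟨huw, rfl⟩⟩
        refine CapturedIn.cut s(u, v) ((SimpleGraph.mem_edgeSet _).mpr hadjuv) fun w hw => ?_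
        rw [exchDelUw hv] at hw ⊢
        have hviso : ∀ y, ¬ (exch u v w₀ (M.deleteEdges {s(u, w₀)})).Adj v y := by
          rintro y ⟨hne, ⟨h1, -⟩ | ⟨h1, -⟩⟩
          · exact hv' y h1
          · exact (delAdj.mp h1).2 rfl
        have hwv : w ≠ v := by
          rintro rfl
          exact hq (reachEqOfIsolated hviso hw.2.symm)
        have hrmap : (M.deleteEdges {s(u, w₀)}).Reachable q w :=
          exchReachNe hv' hq hwv hw.2
        exact ih w ⟨hw.1, hrmap⟩ hv' hwv
      · refine CapturedIn.cut e (exchEdgeMem he hew) fun w hw => ?_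
        rw [exchDelNe hv he hew] at hw ⊢
        by_cases hwv : w = v
        · subst w
          -- the cat moved to the pendant vertex `v`; cut the pendant edge.
          have hnead : ∃ y, (exch u v w₀ (M.deleteEdges {e})).Adj v y := by
            obtain ⟨wk⟩ := hw.2.symm
            cases wk with
            | nil => exact absurd rfl hw.1
            | cons hadj _ => exact ⟨_, hadj⟩
          obtain ⟨y, hyadj⟩ := hnead
          have huwm : (M.deleteEdges {e}).Adj u w₀ := by
            rcases (exch_adj.mp hyadj).2 with ⟨h1, -⟩ | ⟨h1, -⟩
            · exact absurd h1 (hv' y)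
            · exact h1
          have hreachw₀ : (M.deleteEdges {e}).Reachable q w₀ := exchReachV hv' hq hw.2
          have hn1 : 1 ≤ n := by
            by_cases hqw : q = w₀
            · have hru : (M.deleteEdges {e}).Reachable q u := by
                rw [hqw]
                exact huwm.symm.reachable
              have hqu : q ≠ u := by
                rw [hqw]
                exact fun hh => huwm.ne hh.symm
              exact oneLeOfCap (hbr u ⟨hqu, hru⟩) huwm
            · exact oneLeOfCap (hbr w₀ ⟨hqw, hreachw₀⟩) huwm.symm
          obtain ⟨m, rfl⟩ : ∃ m, n = m + 1 := ⟨n - 1, by omega⟩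
          have hXuv : (exch u v w₀ (M.deleteEdges {e})).Adj u v :=
            ⟨huv, Or.inr ⟨huwm, rfl⟩⟩
          refine CapturedIn.cut s(u, v) ((SimpleGraph.mem_edgeSet _).mpr hXuv) fun z hz => ?_
          exfalso
          have hviso2 : ∀ t,
              ¬ ((exch u v w₀ (M.deleteEdges {e})).deleteEdges {s(u, v)}).Adj v t := by
            intro t ht
            obtain ⟨ht1, ht2⟩ := delAdj.mp ht
            rcases (exch_adj.mp ht1).2 with ⟨h1, -⟩ | ⟨-, h2⟩
            · exact hv' t h1
            · exact ht2 h2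
          exact (Ne.symm hz.1) (reachEqOfIsolated hviso2 hz.2)
        · have hrm : (M.deleteEdges {e}).Reachable q w := exchReachNe hv' hq hwv hw.2
          exact ih w ⟨hw.1, hrm⟩ hv' hwv

theorem existsAdjNe {u v : V} {M : SimpleGraph V} (hpend : ∀ y, M.Adj v y → y = u)
    {p : V} (hpv : p ≠ v) (hpu : p ≠ u) (h : M.Reachable p u) :
    ∃ y, y ≠ v ∧ M.Adj u y := by
  classical
  obtain ⟨wk⟩ := h.symm
  obtain ⟨W, hp⟩ := wk.toPath
  cases W with
  | nil => exact absurd rfl hpu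
  | @cons _ y _ hadj rest =>
      by_cases hyv : y = v
      · subst y
        cases rest with
        | nil => exact absurd rfl hpv
        | @cons _ z _ hadj2 rest2 =>
            have hz : z = u := hpend z hadj2
            subst z
            rw [SimpleGraph.Walk.cons_isPath_iff] at hp
            exact absurd
              (by rw [SimpleGraph.Walk.support_cons]
                  exact List.mem_cons_of_mem _ rest2.start_mem_support) hp.2
      · exact ⟨y, hyv, hadj⟩

open Classical in
theorem reachDeleteUv {u v : V} {M : SimpleGraph V} (hpend : ∀ y, M.Adj v y → y = u)
    {a b : V} (hav : a ≠ v) (hbv : b ≠ v) (h : M.Reachable a b) :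
    (M.deleteEdges {s(u, v)}).Reachable a b := by
  have hhom : ∀ x y, M.Adj x y →
      (M.deleteEdges {s(u, v)}).Adj (if x = v then u else x) (if y = v then u else y) ∨
        (if x = v then u else x) = (if y = v then u else y) := by
    intro x y hxy
    by_cases hsv : s(x, y) = s(u, v)
    · right
      rw [Sym2.eq_iff] at hsv
      rcases hsv with ⟨rfl, rfl⟩ | ⟨rfl, rfl⟩ <;> simp
    · left
      have hxv : x ≠ v := by
        rintro rfl
        exact hsv (by rw [hpend y hxy, Sym2.eq_swap])
      have hyv : y ≠ v := by
        rintro rfl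
        exact hsv (by rw [hpend x hxy.symm])
      rw [if_neg hxv, if_neg hyv]
      exact delAdj.mpr ⟨hxy, hsv⟩
  have h2 := pseudoReach (fun z => if z = v then u else z) hhom h
  simp only [if_neg hav, if_neg hbv] at h2
  exact h2

/-- The key combinatorial lemma: in a graph with a pendant `v` at `u` (with a
guard edge at `u` if the cat sits on `u`), capture implies capture with reserve. -/
theorem glMain {u v : V} : ∀ n : ℕ, ∀ (M : SimpleGraph V) (p : V),
    M.Adj u v → (∀ y, M.Adj v y → y = u) → (p = u → ∃ w, w ≠ v ∧ M.Adj u w) →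
    p ≠ v → CapturedIn M p n → CapPlus u M p n := by
  intro n
  induction n using Nat.strong_induction_on with
  | _ n IH =>
  intro M p huv hpend hguard hpv hcap
  cases hcap with
  | isolated hiso =>
      refine CapPlus.isolated hiso fun hr => ?_
      exfalso
      have hup := reachEqOfIsolated hiso hr
      rw [hup] at huv
      exact hiso v huv
  | @cut _ _ m e he hbr =>
      by_cases hee : e = s(u, v)
      · subst hee
        by_cases hr : (M.deleteEdges {s(u, v)}).Reachable p u
        · -- restructure: cut a guard edge `s(u, w₀)` first, using the exchange lemma
          have hKv : ∀ y, ¬ (M.deleteEdges {s(u, v)}).Adj v y := by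
            intro y hy
            obtain ⟨h1, h2⟩ := delAdj.mp hy
            have hyu := hpend y h1
            subst y
            exact h2 Sym2.eq_swap
          obtain ⟨w₀, hw₀v, hw₀K⟩ :
              ∃ w₀, w₀ ≠ v ∧ (M.deleteEdges {s(u, v)}).Adj u w₀ := by
            by_cases hpu : p = u
            · obtain ⟨w₀, h1, h2⟩ := hguard hpu
              refine ⟨w₀, h1, delAdj.mpr ⟨h2, fun hh => ?_⟩⟩
              rw [Sym2.eq_iff] at hh
              rcases hh with ⟨-, hh2⟩ | ⟨hh2, -⟩
              · exact h1 hh2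
              · exact huv.ne hh2
            · obtain ⟨wk⟩ := hr.symm
              cases wk with
              | nil => exact absurd rfl hpu
              | @cons _ y _ hadj _ =>
                  refine ⟨y, fun hyv => ?_, hadj⟩
                  subst y
                  exact hKv u hadj.symm
          have hMuw : M.Adj u w₀ := (delAdj.mp hw₀K).1
          have hm1 : 1 ≤ m := by
            by_cases hpu : p = u
            · refine oneLeOfCap (hbr w₀ ⟨?_, ?_⟩) hw₀K.symm
              · rw [hpu]
                exact hw₀K.ne
              · rw [hpu]
                exact hw₀K.reachable
            · exact oneLeOfCap (hbr u ⟨hpu, hr⟩) hw₀K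
          have hsne : s(u, v) ≠ s(u, w₀) := by
            intro hh
            rw [Sym2.eq_iff] at hh
            rcases hh with ⟨-, hh2⟩ | ⟨hh2, -⟩
            · exact hw₀v hh2.symm
            · exact hMuw.ne hh2
          have hMuw' : (M.deleteEdges {s(u, w₀)}).Adj u v := delAdj.mpr ⟨huv, hsne⟩
          have hpend' : ∀ y, (M.deleteEdges {s(u, w₀)}).Adj v y → y = u :=
            fun y hy => hpend y (delAdj.mp hy).1
          refine CapPlus.cut s(u, w₀) ((SimpleGraph.mem_edgeSet _).mpr hMuw) (fun _ => hm1) ?_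
          intro w hw
          by_cases hwv : w = v
          · subst w
            exact capPlusLeaf hMuw' hpend' hm1
          · have hle : (M.deleteEdges {s(u, w₀)}).deleteEdges {s(u, v)} ≤
                M.deleteEdges {s(u, v)} := by
              intro a b hab
              obtain ⟨h1, h2⟩ := delAdj.mp hab
              exact delAdj.mpr ⟨(delAdj.mp h1).1, h2⟩
            have hKreach : (M.deleteEdges {s(u, v)}).Reachable p w :=
              (reachDeleteUv hpend' hpv hwv hw.2).mono hle
            have hcapK : CapturedIn (M.deleteEdges {s(u, v)}) w m := hbr w ⟨hw.1, hKreach⟩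
            have hcapX : CapturedIn (exch u v w₀ (M.deleteEdges {s(u, v)})) w m :=
              exchCap huv.ne hcapK hKv hwv
            have hXeq : exch u v w₀ (M.deleteEdges {s(u, v)}) =
                M.deleteEdges {s(u, w₀)} := by
              ext a b
              rw [exch_adj]
              constructor
              · rintro ⟨hab, ⟨h1, h2⟩ | ⟨-, h2⟩⟩
                · exact delAdj.mpr ⟨(delAdj.mp h1).1, h2⟩
                · rw [Sym2.eq_iff] at h2
                  rcases h2 with ⟨rfl, rfl⟩ | ⟨rfl, rfl⟩
                  · exact delAdj.mpr ⟨huv, hsne⟩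
                  · exact delAdj.mpr ⟨huv.symm, fun hh => hsne (Sym2.eq_swap.trans hh)⟩
              · intro h1
                obtain ⟨h1a, h1b⟩ := delAdj.mp h1
                by_cases hsv : s(a, b) = s(u, v)
                · exact ⟨h1a.ne, Or.inr ⟨hw₀K, hsv⟩⟩
                · exact ⟨h1a.ne, Or.inl ⟨delAdj.mpr ⟨h1a, hsv⟩, h1b⟩⟩
            rw [hXeq] at hcapX
            refine IH m (Nat.lt_succ_self m) _ w hMuw' hpend' ?_ hwv hcapX
            rintro rfl
            exact existsAdjNe hpend' hpv hw.1 hw.2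
        · refine CapPlus.cut s(u, v) he (fun h' => absurd h' hr) ?_
          intro w hw
          exact capPlusOfNotReach (hbr w hw) fun hru => hr (hw.2.trans hru)
      · have hsne : s(u, v) ≠ e := fun hh => hee hh.symm
        have huvK : (M.deleteEdges {e}).Adj u v := delAdj.mpr ⟨huv, hsne⟩
        have hpend' : ∀ y, (M.deleteEdges {e}).Adj v y → y = u :=
          fun y hy => hpend y (delAdj.mp hy).1
        have hcond : (M.deleteEdges {e}).Reachable p u → 1 ≤ m := by
          intro hre
          by_contra hm
          have hm0 : m = 0 := by omega
          subst hm0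
          by_cases hpu : p = u
          · subst p
            exact capIsolatedOfZero (hbr v ⟨hpv, huvK.reachable⟩) u huvK.symm
          · exact capIsolatedOfZero (hbr u ⟨hpu, hre⟩) v huvK
        refine CapPlus.cut e he hcond ?_
        intro w hw
        by_cases hwv : w = v
        · subst w
          exact capPlusLeaf huvK hpend' (oneLeOfCap (hbr v hw) huvK.symm)
        · refine IH m (Nat.lt_succ_self m) _ w huvK hpend' ?_ hwv (hbr w hw)
          rintro rfl
          exact existsAdjNe hpend' hpv hw.1 hw.2

/-- The lift of a graph on `V` to `Option V` together with the pendant edge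
`some u — none`. -/
def glift (u : V) (M : SimpleGraph V) : SimpleGraph (Option V) where
  Adj a b := (∃ x y, a = some x ∧ b = some y ∧ M.Adj x y) ∨
    (a = some u ∧ b = none) ∨ (a = none ∧ b = some u)
  symm := by
    refine ⟨?_⟩
    rintro a b (⟨x, y, rfl, rfl, h⟩ | ⟨rfl, rfl⟩ | ⟨rfl, rfl⟩)
    · exact Or.inl ⟨y, x, rfl, rfl, h.symm⟩
    · exact Or.inr (Or.inr ⟨rfl, rfl⟩)
    · exact Or.inr (Or.inl ⟨rfl, rfl⟩)
  loopless := by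
    refine ⟨?_⟩
    rintro a (⟨x, y, h1, h2, h⟩ | ⟨rfl, h⟩ | ⟨rfl, h⟩)
    · subst h1
      injection h2 with h2
      subst h2
      exact M.loopless.irrefl _ h
    · cases h
    · cases h

theorem glift_adj {u : V} {M : SimpleGraph V} {a b : Option V} :
    (glift u M).Adj a b ↔ (∃ x y, a = some x ∧ b = some y ∧ M.Adj x y) ∨
      (a = some u ∧ b = none) ∨ (a = none ∧ b = some u) := Iff.rfl

theorem gliftEdgeMem {u : V} {M : SimpleGraph V} {e : Sym2 V} (he : e ∈ M.edgeSet) :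
    Sym2.map some e ∈ (glift u M).edgeSet := by
  induction e using Sym2.ind with
  | _ c d =>
    rw [Sym2.map_pair_eq, SimpleGraph.mem_edgeSet]
    exact Or.inl ⟨c, d, rfl, rfl, (SimpleGraph.mem_edgeSet _).mp he⟩

theorem gliftPendantMem (u : V) (M : SimpleGraph V) :
    s(some u, (none : Option V)) ∈ (glift u M).edgeSet :=
  (SimpleGraph.mem_edgeSet _).mpr (Or.inr (Or.inl ⟨rfl, rfl⟩))

theorem gliftNoneIso (u : V) (M : SimpleGraph V) :
    ∀ t, ¬ ((glift u M).deleteEdges {s(some u, none)}).Adj none t := by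
  intro t ht
  obtain ⟨h1, h2⟩ := delAdj.mp ht
  rcases h1 with ⟨x, y, hx, -, -⟩ | ⟨hx, -⟩ | ⟨-, rfl⟩
  · cases hx
  · cases hx
  · exact h2 Sym2.eq_swap

theorem gliftDel (u : V) (M : SimpleGraph V) (e : Sym2 V) :
    (glift u M).deleteEdges {Sym2.map some e} = glift u (M.deleteEdges {e}) := by
  induction e using Sym2.ind with
  | _ c d =>
  ext a b
  rw [delAdj, Sym2.map_pair_eq, glift_adj, glift_adj]
  constructor
  · rintro ⟨⟨x, y, rfl, rfl, h⟩ | h, hne⟩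
    · refine Or.inl ⟨x, y, rfl, rfl, delAdj.mpr ⟨h, fun hxy => hne ?_⟩⟩
      rw [← Sym2.map_pair_eq some x y, ← Sym2.map_pair_eq some c d]
      exact congrArg _ hxy
    · exact Or.inr h
  · rintro (⟨x, y, rfl, rfl, h⟩ | h)
    · obtain ⟨h1, h2⟩ := delAdj.mp h
      refine ⟨Or.inl ⟨x, y, rfl, rfl, h1⟩, fun heq => h2 ?_⟩
      rw [Sym2.eq_iff] at heq ⊢
      rcases heq with ⟨h3, h4⟩ | ⟨h3, h4⟩
      · exact Or.inl ⟨Option.some.inj h3, Option.some.inj h4⟩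
      · exact Or.inr ⟨Option.some.inj h3, Option.some.inj h4⟩
    · refine ⟨Or.inr h, fun heq => ?_⟩
      rcases h with ⟨rfl, rfl⟩ | ⟨rfl, rfl⟩
      · rw [Sym2.eq_iff] at heq
        rcases heq with ⟨-, h4⟩ | ⟨-, h4⟩
        · cases h4
        · cases h4
      · rw [Sym2.eq_iff] at heq
        rcases heq with ⟨h3, -⟩ | ⟨h3, -⟩
        · cases h3
        · cases h3

theorem gliftReachDown {u : V} {M : SimpleGraph V} {p : V} {z : Option V}
    (h : (glift u M).Reachable (some p) z) : M.Reachable p (z.getD u) := by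
  have hhom : ∀ a b, (glift u M).Adj a b →
      M.Adj (a.getD u) (b.getD u) ∨ a.getD u = b.getD u := by
    rintro a b (⟨x, y, rfl, rfl, hxy⟩ | ⟨rfl, rfl⟩ | ⟨rfl, rfl⟩)
    · exact Or.inl (by simpa using hxy)
    · exact Or.inr rfl
    · exact Or.inr rfl
  have h2 := pseudoReach (fun o : Option V => o.getD u) hhom h
  simpa using h2

/-- Capture-with-reserve implies capture in the graph with a fresh pendant
vertex attached at `u`. -/
theorem mlMain {u : V} {M : SimpleGraph V} {p : V} {n : ℕ} (h : CapPlus u M p n) :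
    CapturedIn (glift u M) (some p) n := by
  induction h with
  | @isolated M p n hiso hc =>
      by_cases hpu : p = u
      · subst p
        have hn : 1 ≤ n := hc (SimpleGraph.Reachable.refl _)
        obtain ⟨m, rfl⟩ : ∃ m, n = m + 1 := ⟨n - 1, by omega⟩
        refine CapturedIn.cut s(some u, none) (gliftPendantMem u M) fun w hw => ?_
        exfalso
        have hiso' : ∀ t, ¬ ((glift u M).deleteEdges {s(some u, none)}).Adj (some u) t := by
          intro t ht
          obtain ⟨h1, h2⟩ := delAdj.mp ht
          rcases h1 with ⟨x, y, hx, rfl, hxy⟩ | ⟨-, rfl⟩ | ⟨hx, -⟩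
          · injection hx with hx
            subst hx
            exact hiso y hxy
          · exact h2 rfl
          · cases hx
        exact hw.1 (reachEqOfIsolated hiso' hw.2).symm
      · refine CapturedIn.isolated ?_
        rintro w (⟨x, y, hx, -, hxy⟩ | ⟨h1, -⟩ | ⟨h1, -⟩)
        · injection hx with hx
          subst hx
          exact hiso y hxy
        · injection h1 with h1
          exact hpu h1
        · cases h1
  | @cut M p n e he hc hbr ih =>
      refine CapturedIn.cut (Sym2.map some e) (gliftEdgeMem he) ?_
      rw [gliftDel]
      intro w hw
      cases w with
      | some w =>
          have h1 : p ≠ w := fun hh => hw.1 (by rw [hh])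
          have h2 : (M.deleteEdges {e}).Reachable p w := by
            have h3 := gliftReachDown hw.2
            simpa using h3
          exact ih w ⟨h1, h2⟩
      | none =>
          have hru : (M.deleteEdges {e}).Reachable p u := by
            have h3 := gliftReachDown hw.2
            simpa using h3
          have hn := hc hru
          obtain ⟨m, rfl⟩ : ∃ m, n = m + 1 := ⟨n - 1, by omega⟩
          refine CapturedIn.cut s(some u, none) (gliftPendantMem u _) fun z hz => ?_
          exact absurd (reachEqOfIsolated (gliftNoneIso u _) hz.2) (Ne.symm hz.1)

theorem addLeaf_eq_glift (G : SimpleGraph V) (u : V) : addLeaf G u = glift u G := by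
  ext a b
  rw [addLeaf, SimpleGraph.fromRel_adj, glift_adj]
  constructor
  · rintro ⟨hne, (⟨x, y, rfl, rfl, h⟩ | ⟨rfl, rfl⟩) | (⟨x, y, rfl, rfl, h⟩ | ⟨rfl, rfl⟩)⟩
    · exact Or.inl ⟨x, y, rfl, rfl, h⟩
    · exact Or.inr (Or.inl ⟨rfl, rfl⟩)
    · exact Or.inl ⟨y, x, rfl, rfl, h.symm⟩
    · exact Or.inr (Or.inr ⟨rfl, rfl⟩)
  · rintro (⟨x, y, rfl, rfl, h⟩ | ⟨rfl, rfl⟩ | ⟨rfl, rfl⟩)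
    · exact ⟨fun hh => h.ne (Option.some.inj hh), Or.inl (Or.inl ⟨x, y, rfl, rfl, h⟩)⟩
    · exact ⟨fun hh => (by cases hh), Or.inl (Or.inr ⟨rfl, rfl⟩)⟩
    · exact ⟨fun hh => (by cases hh), Or.inr (Or.inr ⟨rfl, rfl⟩)⟩

end CatAux

/-- duplicating a leaf does not change cat numbers. -/
theorem addLeaf_catNum {V : Type u} (G : SimpleGraph V) (hc : G.Connected)
    (u v : V) (hdu : DegGe G u 2) (huv : G.Adj u v) (hdv : DegOne G v) :
    (∀ a : V, catVNum (addLeaf G u) (some a) = catVNum G a) ∧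
    catVNum (addLeaf G u) none = 1 ∧
    catNum (addLeaf G u) = catNum G := by
  obtain ⟨b₀, hb₀⟩ := hdv
  have hpend : ∀ y, G.Adj v y → y = u := by
    intro y hy
    have hyb : y ∈ G.neighborSet v := hy
    have hub : u ∈ G.neighborSet v := huv.symm
    rw [hb₀, Set.mem_singleton_iff] at hyb hub
    exact hyb.trans hub.symm
  have hguard : ∃ w, w ≠ v ∧ G.Adj u w := by
    obtain ⟨s, hs2, hsadj⟩ := hdu
    have hex : ∃ w ∈ s, w ≠ v := by
      by_contra hcon
      push_neg at hcon
      have hsub : s ⊆ {v} := fun x hx => Finset.mem_singleton.mpr (hcon x hx)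
      have hc1 := Finset.card_le_card hsub
      rw [hs2, Finset.card_singleton] at hc1
      omega
    obtain ⟨w, hws, hwv⟩ := hex
    exact ⟨w, hwv, hsadj w hws⟩
  have hGl := addLeaf_eq_glift G u
  have key : ∀ (a : V) (m : ℕ), CapturedIn (addLeaf G u) (some a) m ↔ CapturedIn G a m := by
    intro a m
    rw [hGl]
    constructor
    · intro h
      exact homCap some (Option.some_injective V) h G a rfl
        (fun x y hxy => Or.inl ⟨x, y, rfl, rfl, hxy⟩)
    · intro h
      apply mlMain
      by_cases hav : a = v
      · subst a
        exact capPlusLeaf huv hpend (oneLeOfCap h huv.symm)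
      · exact glMain m G a huv hpend (fun _ => hguard) hav h
  have part1 : ∀ a : V, catVNum (addLeaf G u) (some a) = catVNum G a := by
    intro a
    have hset : {m : ℕ | CapturedIn (addLeaf G u) (some a) m} = {m | CapturedIn G a m} :=
      Set.ext fun m => key a m
    rw [catVNum, catVNum, hset]
  have hcap1 : CapturedIn (addLeaf G u) none 1 := by
    rw [hGl]
    refine CapturedIn.cut s(some u, none) (gliftPendantMem u G) fun z hz => ?_
    exact absurd (reachEqOfIsolated (gliftNoneIso u G) hz.2) (Ne.symm hz.1)
  have hncap0 : ¬ CapturedIn (addLeaf G u) none 0 := by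
    intro h
    have h2 := capIsolatedOfZero h (some u)
    rw [hGl] at h2
    exact h2 (Or.inr (Or.inr ⟨rfl, rfl⟩))
  have part2 : catVNum (addLeaf G u) none = 1 := by
    rw [catVNum]
    apply le_antisymm
    · exact sInf_le ⟨1, hcap1, Nat.cast_one⟩
    · refine le_sInf ?_
      rintro x ⟨m, hm, rfl⟩
      have hm0 : m ≠ 0 := fun hh => hncap0 (hh ▸ hm)
      exact_mod_cast Nat.one_le_iff_ne_zero.mpr hm0
  refine ⟨part1, part2, ?_⟩
  have huge1 : (1 : ℕ∞) ≤ catVNum G u := by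
    rw [catVNum]
    refine le_sInf ?_
    rintro x ⟨m, hm, rfl⟩
    have hm0 : m ≠ 0 := fun hh => (capIsolatedOfZero (hh ▸ hm) v) huv
    exact_mod_cast Nat.one_le_iff_ne_zero.mpr hm0
  rw [catNum, catNum, iSup_option]
  rw [part2]
  simp only [part1]
  exact sup_eq_right.mpr (le_trans huge1 (le_iSup _ u))
end

section
/- Let G be a connected graph and v a vertex with cat(G, v) ≥ 2. Then cat(G, v) = 2 if and only if there exists an edge e of G such that in G − e, the connected component containing v is a star with v as its center. -/
open SimpleGraph

universe u

lemma capturedIn_mono {V : Type u} {G : SimpleGraph V} {v : V} {m n : ℕ}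
    (h : CapturedIn G v m) (hmn : m ≤ n) : CapturedIn G v n := by
  induction h generalizing n with
  | isolated h => exact .isolated h
  | cut e he h ih =>
      obtain ⟨n', rfl⟩ : ∃ n', n = n' + 1 := ⟨n - 1, by omega⟩
      exact .cut e he fun w hw => ih w hw (by omega)

lemma reach_of_isolated {V : Type u} {G : SimpleGraph V} {w u : V}
    (h : ∀ z, ¬ G.Adj w z) (hr : G.Reachable w u) : u = w := by
  obtain ⟨p⟩ := hr
  cases p with
  | nil => rfl
  | cons ha _ => exact absurd ha (h _)

lemma walk_pair {V : Type u} {G : SimpleGraph V} {x y : V}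
    (hx : ∀ z, G.Adj x z → z = y) (hy : ∀ z, G.Adj y z → z = x) :
    ∀ {a b : V} (_ : G.Walk a b), (a = x ∨ a = y) → (b = x ∨ b = y) := by
  intro a b p
  induction p with
  | nil => exact id
  | cons h _ ih =>
      intro ha
      apply ih
      rcases ha with rfl | rfl
      · exact Or.inr (hx _ h)
      · exact Or.inl (hy _ h)

/-- For a connected `G` and `v` with `cat(G,v) ≥ 2`,
`cat(G,v) = 2` iff some edge deletion leaves `v` the center of a star component. -/
theorem catVNum_eq_two_iff {V : Type u} (G : SimpleGraph V) (hc : G.Connected)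
    (v : V) (h2 : 2 ≤ catVNum G v) :
    catVNum G v = 2 ↔ ∃ e ∈ G.edgeSet,
      ∀ x y : V, (G.deleteEdges {e}).Adj x y →
        (G.deleteEdges {e}).Reachable v x → (x = v ∨ y = v) := by
  constructor
  · intro heq
    have hcap2 : CapturedIn G v 2 := by
      by_contra hcn
      have h3 : (3 : ℕ∞) ≤ catVNum G v := by
        apply le_sInf
        rintro x ⟨m, hm, rfl⟩
        have hm3 : 3 ≤ m := by
          by_contra hlt
          exact hcn (capturedIn_mono hm (by omega))
        exact_mod_cast hm3
      rw [heq] at h3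
      norm_num at h3
    cases hcap2 with
    | isolated h =>
        exfalso
        have h0 : catVNum G v ≤ 0 := sInf_le ⟨0, .isolated h, rfl⟩
        have := le_trans h2 h0
        norm_num at this
    | cut e he h =>
        refine ⟨e, he, ?_⟩
        intro x y hxy hvx
        by_contra hcon
        push_neg at hcon
        obtain ⟨hx, hy⟩ := hcon
        -- neighbors of x in G' are exactly {y}, via CapturedIn _ x 1
        have key : ∀ a b : V, (G.deleteEdges {e}).Adj a b →
            CapturedIn (G.deleteEdges {e}) a 1 →
            ∀ z, (G.deleteEdges {e}).Adj a z → z = b := by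
          intro a b hab hcap z hz
          cases hcap with
          | isolated hiso => exact absurd hab (hiso b)
          | cut e' he' h' =>
              have haiso : ∀ u, ¬ ((G.deleteEdges {e}).deleteEdges {e'}).Adj a u := by
                intro u hu
                have hcm : CatMove ((G.deleteEdges {e}).deleteEdges {e'}) a u :=
                  ⟨hu.ne, hu.reachable⟩
                cases h' u hcm with
                | isolated hi => exact hi a hu.symm
              have h1 : s(a, z) = e' := by
                by_contra hne
                refine haiso z ?_
                rw [SimpleGraph.deleteEdges_adj]
                exact ⟨hz, by simpa using hne⟩
              have h2' : s(a, b) = e' := by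
                by_contra hne
                refine haiso b ?_
                rw [SimpleGraph.deleteEdges_adj]
                exact ⟨hab, by simpa using hne⟩
              have := h1.trans h2'.symm
              rw [Sym2.eq_iff] at this
              rcases this with ⟨_, rfl⟩ | ⟨rfl, rfl⟩
              · rfl
              · exact absurd hz hz.ne.irrefl.elim
        have hcx : CapturedIn (G.deleteEdges {e}) x 1 := h x ⟨Ne.symm hx, hvx⟩
        have hvy : (G.deleteEdges {e}).Reachable v y := hvx.trans hxy.reachable
        have hcy : CapturedIn (G.deleteEdges {e}) y 1 := h y ⟨Ne.symm hy, hvy⟩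
        have hnx : ∀ z, (G.deleteEdges {e}).Adj x z → z = y := key x y hxy hcx
        have hny : ∀ z, (G.deleteEdges {e}).Adj y z → z = x := key y x hxy.symm hcy
        obtain ⟨p⟩ := hvx.symm
        rcases walk_pair hnx hny p (Or.inl rfl) with rfl | rfl
        · exact hx rfl
        · exact hy rfl
  · rintro ⟨e, he, hstar⟩
    refine le_antisymm ?_ h2
    apply sInf_le
    refine ⟨2, ?_, rfl⟩
    refine CapturedIn.cut e he fun w hw => ?_
    obtain ⟨hne, hreach⟩ := hw
    by_cases hiso : ∀ z, ¬ (G.deleteEdges {e}).Adj w z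
    · exact .isolated hiso
    · push_neg at hiso
      obtain ⟨z, hz⟩ := hiso
      have hzv : z = v := (hstar w z hz hreach).resolve_left (Ne.symm hne)
      subst hzv
      refine CapturedIn.cut s(w, z) (((G.deleteEdges {e}).mem_edgeSet).mpr hz) fun w' hw' => ?_
      exfalso
      have hiso2 : ∀ u, ¬ ((G.deleteEdges {e}).deleteEdges {s(w, z)}).Adj w u := by
        intro u hu
        rw [SimpleGraph.deleteEdges_adj] at hu
        have huz : u = z := (hstar w u hu.1 hreach).resolve_left (Ne.symm hne)
        subst huz
        simp at hu
      exact hw'.1 (reach_of_isolated hiso2 hw'.2).symm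
end

section
/- Let G be a connected graph containing two distinct cycles and satisfying cat(G) = 3. Then G has exactly 6 vertices and is isomorphic to two disjoint triangles joined by a single bridge edge. -/
open SimpleGraph

universe u

/-- Two disjoint triangles joined by a bridge. -/
def twoTrianglesBridge : SimpleGraph (Fin 6) :=
  SimpleGraph.fromEdgeSet {s(0,1), s(1,2), s(0,2), s(3,4), s(4,5), s(3,5), s(2,3)}

namespace CatAux

variable {V : Type u}

/-- has at most one neighbour -/
def Uniq (H : SimpleGraph V) (x : V) : Prop := ∀ a b, H.Adj x a → H.Adj x b → a = b

def Starifiable (H : SimpleGraph V) (w : V) : Prop :=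
  ∃ f ∈ H.edgeSet, ∀ x, (H.deleteEdges {f}).Reachable w x → x ≠ w →
    Uniq (H.deleteEdges {f}) x

lemma capturedIn_mono {G : SimpleGraph V} {v : V} {m n : ℕ}
    (h : CapturedIn G v m) (hmn : m ≤ n) : CapturedIn G v n := by
  induction h generalizing n with
  | isolated h => exact CapturedIn.isolated h
  | cut e he hstep ih =>
    rcases n with _ | n
    · omega
    · exact CapturedIn.cut e he fun w hw => ih w hw (by omega)

lemma cap0 {G : SimpleGraph V} {v : V} (h : CapturedIn G v 0) : ∀ x, ¬ G.Adj v x := by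
  cases h with
  | isolated h => exact h

lemma cap1_uniq {H : SimpleGraph V} {w : V} (h : CapturedIn H w 1) : Uniq H w := by
  cases h with
  | isolated h => exact fun a b ha _ => absurd ha (h a)
  | cut e he hstep =>
    intro a b ha hb
    by_contra hne
    have hab : s(w, a) ≠ s(w, b) := fun hh => hne (Sym2.congr_right.mp hh)
    have key : ∀ x : V, H.Adj w x → s(w, x) ≠ e → False := by
      intro x hx hxe
      have hadj : (H.deleteEdges {e}).Adj w x :=
        SimpleGraph.deleteEdges_adj.mpr ⟨hx, by simpa using hxe⟩
      have := hstep x ⟨hadj.ne, hadj.reachable⟩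
      exact cap0 this w hadj.symm
    by_cases hae : s(w, a) = e
    · exact key b hb (fun hh => hab (hae.trans hh.symm))
    · exact key a ha hae

lemma cap2_star {H : SimpleGraph V} {w : V} (h : CapturedIn H w 2) :
    (∀ x, ¬ H.Adj w x) ∨ Starifiable H w := by
  cases h with
  | isolated h => exact Or.inl h
  | cut e he hstep =>
    right
    refine ⟨e, he, fun x hx hxw => ?_⟩
    exact cap1_uniq (hstep x ⟨fun h' => hxw h'.symm, hx⟩)

lemma cap3_main {G : SimpleGraph V} {v : V} (h : CapturedIn G v 3) :
    (∀ x, ¬ G.Adj v x) ∨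
      ∃ e1 ∈ G.edgeSet, ∀ w, (G.deleteEdges {e1}).Reachable v w → w ≠ v →
        ((∀ x, ¬ (G.deleteEdges {e1}).Adj w x) ∨ Starifiable (G.deleteEdges {e1}) w) := by
  cases h with
  | isolated h => exact Or.inl h
  | cut e he hstep =>
    right
    refine ⟨e, he, fun w hw hwv => ?_⟩
    exact cap2_star (hstep w ⟨fun h' => hwv h'.symm, hw⟩)

lemma reach_of_edges_subset {H K : SimpleGraph V} {a b : V} (p : H.Walk a b)
    (h : ∀ e ∈ p.edges, e ∈ K.edgeSet) : K.Reachable a b := by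
  induction p with
  | nil => exact Reachable.refl _
  | cons hadj q ih =>
    refine Reachable.trans ?_ (ih fun e heq => h e (by simp [heq]))
    exact ((SimpleGraph.mem_edgeSet K).mp (h _ (by simp))).reachable

lemma reach_ne_exists_adj {H : SimpleGraph V} {v w : V} (h : H.Reachable v w) (hne : v ≠ w) :
    ∃ u, H.Adj w u := by
  obtain ⟨p⟩ := h
  cases hp : p.reverse with
  | nil =>
    exfalso
    have : p.length = 0 := by
      have := congrArg SimpleGraph.Walk.length hp
      simpa using this
    exact hne (p.eq_of_length_eq_zero this) |>.elim
  | cons hadj q => exact ⟨_, hadj⟩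

lemma reach_descend {H : SimpleGraph V} {α β : V}
    (hr : (H.deleteEdges {s(α, β)}).Reachable α β) :
    ∀ {u w : V}, H.Reachable u w → (H.deleteEdges {s(α, β)}).Reachable u w := by
  intro u w h
  obtain ⟨p⟩ := h
  induction p with
  | nil => exact Reachable.refl _
  | @cons a c d hadj q ih =>
    refine Reachable.trans ?_ ih
    by_cases hh : s(a, c) = s(α, β)
    · rcases Sym2.eq_iff.mp hh with ⟨rfl, rfl⟩ | ⟨rfl, rfl⟩
      · exact hr
      · exact hr.symm
    · exact (SimpleGraph.deleteEdges_adj.mpr ⟨hadj, by simpa using hh⟩).reachable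

lemma reach_deleteEdge_cases {G : SimpleGraph V} {p q u w : V} (h : G.Reachable u w) :
    (G.deleteEdges {s(p, q)}).Reachable u w ∨
      (G.deleteEdges {s(p, q)}).Reachable u p ∨ (G.deleteEdges {s(p, q)}).Reachable u q := by
  obtain ⟨pw⟩ := h
  induction pw with
  | nil => exact Or.inl (Reachable.refl _)
  | @cons a c d hadj r ih =>
    by_cases hh : s(a, c) = s(p, q)
    · rcases Sym2.eq_iff.mp hh with ⟨rfl, rfl⟩ | ⟨rfl, rfl⟩
      · exact Or.inr (Or.inl (Reachable.refl _))
      · exact Or.inr (Or.inr (Reachable.refl _))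
    · have hadj' : (G.deleteEdges {s(p, q)}).Adj a c :=
        SimpleGraph.deleteEdges_adj.mpr ⟨hadj, by simpa using hh⟩
      rcases ih with h1 | h2 | h3
      · exact Or.inl (hadj'.reachable.trans h1)
      · exact Or.inr (Or.inl (hadj'.reachable.trans h2))
      · exact Or.inr (Or.inr (hadj'.reachable.trans h3))

lemma closed_comp {H : SimpleGraph V} {S : Set V}
    (hS : ∀ u ∈ S, ∀ z, H.Adj u z → z ∈ S) {v u : V} (hv : v ∈ S)
    (h : H.Reachable v u) : u ∈ S := by
  obtain ⟨p⟩ := h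
  induction p with
  | nil => exact hv
  | cons hadj r ih => exact ih (hS _ hv _ hadj)


variable {V : Type u}

lemma bridge_reach {G : SimpleGraph V} {x α β : V} {c : G.Walk x x} (hc : c.IsCycle)
    (he : s(α, β) ∈ c.edges) : (G.deleteEdges {s(α, β)}).Reachable α β :=
  ((SimpleGraph.adj_and_reachable_delete_edges_iff_exists_cycle).mpr ⟨x, c, hc, he⟩).2

lemma cycle_two_edges_base {G : SimpleGraph V} {w : V} {q : G.Walk w w} (hq : q.IsCycle) :
    ∃ a b, a ≠ b ∧ s(w, a) ∈ q.edges ∧ s(w, b) ∈ q.edges := by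
  have hlen := hq.three_le_length
  cases q with
  | nil => simp at hlen
  | @cons _ y _ hadj t =>
    obtain ⟨z, q', hzw, hQ⟩ := SimpleGraph.Walk.exists_cons_eq_concat hadj t
    have h1 : s(w, y) ∈ (SimpleGraph.Walk.cons hadj t).edges := by simp
    have h2 : s(w, z) ∈ (SimpleGraph.Walk.cons hadj t).edges := by
      rw [hQ, SimpleGraph.Walk.edges_concat]
      simp [Sym2.eq_swap]
    refine ⟨y, z, ?_, h1, h2⟩
    rintro rfl
    have e1 : (SimpleGraph.Walk.cons hadj t).edges = s(w, y) :: t.edges := rfl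
    have e2 : (SimpleGraph.Walk.cons hadj t).edges = q'.edges ++ [s(w, y)] := by
      rw [hQ, SimpleGraph.Walk.edges_concat, Sym2.eq_swap, List.concat_eq_append]
    have hnodup : (SimpleGraph.Walk.cons hadj t).edges.Nodup := hq.isTrail.edges_nodup
    rw [e1] at hnodup
    have e3 : s(w, y) :: t.edges = q'.edges ++ [s(w, y)] := e1.symm.trans e2
    have hmem : s(w, y) ∈ t.edges := by
      rcases hq' : q'.edges with _ | ⟨g, rest⟩
      · rw [hq'] at e3
        simp only [List.nil_append] at e3
        have ht : t.edges = [] := by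
          have := (List.cons_eq_cons).mp e3
          exact this.2.symm ▸ rfl
        have ht0 : t.length = 0 := by
          have := SimpleGraph.Walk.length_edges t
          rw [ht] at this
          simpa using this.symm
        simp [SimpleGraph.Walk.length_cons, ht0] at hlen
      · rw [hq', List.cons_append] at e3
        have := (List.cons_eq_cons).mp e3
        rw [this.2]
        simp
    exact (List.nodup_cons.mp hnodup).1 hmem


lemma cycle_two_edges {G : SimpleGraph V} {x w : V} {c : G.Walk x x} (hc : c.IsCycle)
    (hw : w ∈ c.support) : ∃ a b, a ≠ b ∧ s(w, a) ∈ c.edges ∧ s(w, b) ∈ c.edges := by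
  classical
  obtain ⟨a, b, hab, h1, h2⟩ := cycle_two_edges_base (hc.rotate hw)
  have hperm := (c.rotate_edges w hw).perm
  exact ⟨a, b, hab, hperm.mem_iff.mp h1, hperm.mem_iff.mp h2⟩

lemma cycle_three_distinct {G : SimpleGraph V} {x : V} {c : G.Walk x x} (hc : c.IsCycle) :
    ∃ a b, a ≠ b ∧ x ≠ a ∧ x ≠ b ∧ a ∈ c.support ∧ b ∈ c.support := by
  obtain ⟨a, b, hab, h1, h2⟩ := cycle_two_edges hc (SimpleGraph.Walk.start_mem_support c)
  exact ⟨a, b, hab, (c.adj_of_mem_edges h1).ne, (c.adj_of_mem_edges h2).ne,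
    SimpleGraph.Walk.snd_mem_support_of_mem_edges c h1,
    SimpleGraph.Walk.snd_mem_support_of_mem_edges c h2⟩

lemma path_last_edge {G : SimpleGraph V} {β : V} :
    ∀ {u α : V} (t : G.Walk u α), t.IsPath → s(α, β) ∈ t.edges →
      ∃ t₂ : G.Walk u β, t₂.IsPath ∧ (∀ f, f ∈ t.edges ↔ f = s(α, β) ∨ f ∈ t₂.edges) ∧
        s(α, β) ∉ t₂.edges ∧ α ∉ t₂.support ∧ t₂.support ⊆ t.support := by
  intro u α t
  induction t with
  | nil => simp
  | @cons a z d hadj rest ih =>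
    intro hp he
    have hp' := (SimpleGraph.Walk.cons_isPath_iff hadj rest).mp hp
    by_cases hfirst : s(a, z) = s(d, β)
    · rcases Sym2.eq_iff.mp hfirst with ⟨ha, hz⟩ | ⟨ha, hz⟩
      · exfalso
        exact hp'.2 (ha ▸ SimpleGraph.Walk.end_mem_support rest)
      · subst hz
        have hnil : rest = SimpleGraph.Walk.nil :=
          SimpleGraph.Walk.isPath_iff_eq_nil.mp hp'.1
        subst hnil
        subst ha
        refine ⟨SimpleGraph.Walk.nil, by simp, ?_, by simp [Sym2.eq_swap],
          by simp [hadj.ne'], by simp⟩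
        intro f
        simp [Sym2.eq_swap]
    · have he' : s(d, β) ∈ rest.edges := by
        rw [SimpleGraph.Walk.edges_cons] at he
        rcases List.mem_cons.mp he with h | h
        · exact absurd h.symm hfirst
        · exact h
      obtain ⟨t₂', hpath, hiff, hnot, hα, hsub⟩ := ih hp'.1 he'
      have haz : a ∉ t₂'.support := fun h => hp'.2 (hsub h)
      refine ⟨SimpleGraph.Walk.cons hadj t₂',
        (SimpleGraph.Walk.cons_isPath_iff hadj t₂').mpr ⟨hpath, haz⟩, ?_, ?_, ?_, ?_⟩
    
      · intro f
        have := hiff f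
        simp only [SimpleGraph.Walk.edges_cons, List.mem_cons]
        tauto
      · simp only [SimpleGraph.Walk.edges_cons, List.mem_cons]
        push_neg
        exact ⟨fun h => hfirst h.symm, hnot⟩
      · have haα : a ≠ d := fun h => hp'.2 (h ▸ SimpleGraph.Walk.end_mem_support rest)
        simp only [SimpleGraph.Walk.support_cons, List.mem_cons]
        push_neg
        exact ⟨fun h => haα h.symm, hα⟩
      · simp only [SimpleGraph.Walk.support_cons]
        intro f hf
        rcases List.mem_cons.mp hf with h | h
        · simp [h]
        · simp [hsub h]

lemma cycle_decomp {G : SimpleGraph V} {α β : V} (q : G.Walk α α) (hq : q.IsCycle)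
    (he : s(α, β) ∈ q.edges) :
    ∃ t : G.Walk β α, t.IsPath ∧ s(α, β) ∉ t.edges ∧
      (∀ f, f ∈ q.edges ↔ f = s(α, β) ∨ f ∈ t.edges) := by
  cases q with
  | nil => simp at he
  | @cons _ y _ hadj t =>
    have hcyc := (SimpleGraph.Walk.cons_isCycle_iff t hadj).mp hq
    rw [SimpleGraph.Walk.edges_cons] at he
    rcases List.mem_cons.mp he with heq | hmem
    · have hby : β = y := Sym2.congr_right.mp heq
      subst hby
      refine ⟨t, hcyc.1, hcyc.2, ?_⟩
      intro f
      simp only [SimpleGraph.Walk.edges_cons, List.mem_cons]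
    · have hbney : β ≠ y := by
        rintro rfl
        exact hcyc.2 hmem
      obtain ⟨t₂, hpath, hiff, hnot, hαsup, _⟩ := path_last_edge t hcyc.1 hmem
      refine ⟨(SimpleGraph.Walk.cons hadj t₂).reverse, ?_, ?_, ?_⟩
      · exact ((SimpleGraph.Walk.cons_isPath_iff hadj t₂).mpr ⟨hpath, hαsup⟩).reverse
      · rw [SimpleGraph.Walk.edges_reverse, List.mem_reverse]
        simp only [SimpleGraph.Walk.edges_cons, List.mem_cons]
        push_neg
        exact ⟨fun h => hbney (Sym2.congr_right.mp h), hnot⟩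
      · intro f
        rw [SimpleGraph.Walk.edges_reverse, List.mem_reverse]
        simp only [SimpleGraph.Walk.edges_cons, List.mem_cons]
        have := hiff f
        tauto

lemma exists_cycle_deleteEdge {G : SimpleGraph V} {c₁ c₂ : V}
    {p₁ : G.Walk c₁ c₁} {p₂ : G.Walk c₂ c₂}
    (h₁ : p₁.IsCycle) (h₂ : p₂.IsCycle)
    (hne : {e | e ∈ p₁.edges} ≠ {e | e ∈ p₂.edges}) (e : Sym2 V) :
    ∃ (z : V) (c : (G.deleteEdges {e}).Walk z z), c.IsCycle := by
  classical
  by_cases he1 : e ∈ p₁.edges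
  · by_cases he2 : e ∈ p₂.edges
    · by_contra hno
      push_neg at hno
      have hac : (G.deleteEdges {e}).IsAcyclic := fun z c hc => hno z c hc
      exfalso
      induction e using Sym2.ind with
      | _ α β =>
      have hα1 : α ∈ p₁.support := SimpleGraph.Walk.fst_mem_support_of_mem_edges p₁ he1
      have hα2 : α ∈ p₂.support := SimpleGraph.Walk.fst_mem_support_of_mem_edges p₂ he2
      have hq1 : s(α, β) ∈ (p₁.rotate α hα1).edges := (p₁.rotate_edges α hα1).perm.mem_iff.mpr he1
      have hq2 : s(α, β) ∈ (p₂.rotate α hα2).edges := (p₂.rotate_edges α hα2).perm.mem_iff.mpr he2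
      obtain ⟨t₁, ht₁p, ht₁n, ht₁iff⟩ := cycle_decomp _ (h₁.rotate hα1) hq1
      obtain ⟨t₂, ht₂p, ht₂n, ht₂iff⟩ := cycle_decomp _ (h₂.rotate hα2) hq2
      have hav1 : ∀ f ∈ t₁.edges, f ∉ ({s(α, β)} : Set (Sym2 V)) := by
        intro f hf
        simp only [Set.mem_singleton_iff]
        rintro rfl
        exact ht₁n hf
      have hav2 : ∀ f ∈ t₂.edges, f ∉ ({s(α, β)} : Set (Sym2 V)) := by
        intro f hf
        simp only [Set.mem_singleton_iff]
        rintro rfl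
        exact ht₂n hf
      have hP : (⟨t₁.toDeleteEdges {s(α, β)} hav1,
            ht₁p.toDeleteEdges G {s(α, β)} hav1⟩ :
          (G.deleteEdges {s(α, β)}).Path β α) =
          ⟨t₂.toDeleteEdges {s(α, β)} hav2,
            ht₂p.toDeleteEdges G {s(α, β)} hav2⟩ :=
        hac.path_unique _ _
      have hw : t₁.toDeleteEdges {s(α, β)} hav1 = t₂.toDeleteEdges {s(α, β)} hav2 :=
        congrArg Subtype.val hP
      have hedges : t₁.edges = t₂.edges := by
        have h := congrArg SimpleGraph.Walk.edges hw
        rwa [SimpleGraph.Walk.edges_transfer, SimpleGraph.Walk.edges_transfer] at h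
      apply hne
      ext f
      simp only [Set.mem_setOf_eq]
      rw [(p₁.rotate_edges α hα1).perm.mem_iff.symm, (p₂.rotate_edges α hα2).perm.mem_iff.symm,
        ht₁iff f, ht₂iff f, hedges]
    · have hav : ∀ f ∈ p₂.edges, f ∉ ({e} : Set (Sym2 V)) := by
        intro f hf
        simp only [Set.mem_singleton_iff]
        rintro rfl
        exact he2 hf
      exact ⟨c₂, p₂.toDeleteEdges ({e} : Set (Sym2 V)) hav, h₂.toDeleteEdges G ({e} : Set (Sym2 V)) hav⟩
  · have hav : ∀ f ∈ p₁.edges, f ∉ ({e} : Set (Sym2 V)) := by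
      intro f hf
      simp only [Set.mem_singleton_iff]
      rintro rfl
      exact he1 hf
    exact ⟨c₁, p₁.toDeleteEdges ({e} : Set (Sym2 V)) hav, h₁.toDeleteEdges G ({e} : Set (Sym2 V)) hav⟩


lemma del_adj {H : SimpleGraph V} {f : Sym2 V} {a b : V} :
    (H.deleteEdges {f}).Adj a b ↔ H.Adj a b ∧ s(a, b) ≠ f := by
  rw [SimpleGraph.deleteEdges_adj]
  simp

lemma three_pigeon {A : Type*} {u1 u2 u3 a b : A} (h12 : u1 ≠ u2) (h13 : u1 ≠ u3)
    (h23 : u2 ≠ u3) (m1 : u1 = a ∨ u1 = b) (m2 : u2 = a ∨ u2 = b)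
    (m3 : u3 = a ∨ u3 = b) : False := by
  rcases m1 with rfl | rfl <;> rcases m2 with rfl | rfl <;> rcases m3 with rfl | rfl <;>
    simp_all

lemma star_contra {H : SimpleGraph V} {w p q r : V} (hwp : H.Adj w p) (hwq : H.Adj w q)
    (hpq : H.Adj p q) (hpr : H.Adj p r) (hrw : r ≠ w) (hrq : r ≠ q) :
    ¬ Starifiable H w := by
  rintro ⟨f, hf, hstar⟩
  by_cases h1 : f = s(w, p)
  · have hx : (H.deleteEdges {f}).Adj w q := del_adj.mpr ⟨hwq, by
      rw [h1]; intro hh; exact hpq.ne' (Sym2.congr_right.mp hh)⟩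
    have h2 : (H.deleteEdges {f}).Adj q w := hx.symm
    have h3 : (H.deleteEdges {f}).Adj q p := del_adj.mpr ⟨hpq.symm, by
      rw [h1]; intro hh
      rcases Sym2.eq_iff.mp hh with ⟨hq, _⟩ | ⟨hq, hp⟩
      · exact hwq.ne' hq
      · exact hpq.ne hq.symm⟩
    exact hwp.ne (hstar q hx.reachable hwq.ne' w p h2 h3)
  · by_cases h2 : f = s(w, q)
    · have hx : (H.deleteEdges {f}).Adj w p := del_adj.mpr ⟨hwp, by
        rw [h2]; intro hh; exact hpq.ne (Sym2.congr_right.mp hh)⟩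
      have ha : (H.deleteEdges {f}).Adj p q := del_adj.mpr ⟨hpq, by
        rw [h2]; intro hh
        rcases Sym2.eq_iff.mp hh with ⟨hp, _⟩ | ⟨_, hq⟩
        · exact hwp.ne hp.symm
        · exact hwq.ne' hq⟩
      have hb : (H.deleteEdges {f}).Adj p r := del_adj.mpr ⟨hpr, by
        rw [h2]; intro hh
        rcases Sym2.eq_iff.mp hh with ⟨_, hr⟩ | ⟨_, hr⟩
        · exact hrq hr
        · exact hrw hr⟩
      exact hrq.symm (hstar p hx.reachable hwp.ne' q r ha hb)
    · by_cases h3 : f = s(p, q)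
      · have hx : (H.deleteEdges {f}).Adj w p := del_adj.mpr ⟨hwp, by
          rw [h3]; intro hh
          rcases Sym2.eq_iff.mp hh with ⟨hw', _⟩ | ⟨hw', _⟩
          · exact hwp.ne hw'
          · exact hwq.ne hw'⟩
        have ha : (H.deleteEdges {f}).Adj p w := hx.symm
        have hb : (H.deleteEdges {f}).Adj p r := del_adj.mpr ⟨hpr, by
          rw [h3]; intro hh
          rcases Sym2.eq_iff.mp hh with ⟨_, hr⟩ | ⟨hp, _⟩
          · exact hrq hr
          · exact hpq.ne hp⟩
        exact hrw.symm (hstar p hx.reachable hwp.ne' w r ha hb)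
      · have hx : (H.deleteEdges {f}).Adj w p := del_adj.mpr ⟨hwp, fun hh => h1 hh.symm⟩
        have ha : (H.deleteEdges {f}).Adj p w := hx.symm
        have hb : (H.deleteEdges {f}).Adj p q := del_adj.mpr ⟨hpq, fun hh => h3 hh.symm⟩
        exact hwq.ne (hstar p hx.reachable hwp.ne' w q ha hb)


lemma Qlem {H : SimpleGraph V} {x w : V} {c : H.Walk x x} (hc : c.IsCycle)
    (hw : w ∈ c.support) (hst : Starifiable H w) :
    ∃ α β, α ≠ β ∧ w ≠ α ∧ w ≠ β ∧ α ∈ c.support ∧ β ∈ c.support ∧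
      H.Adj w α ∧ H.Adj w β ∧ H.Adj α β ∧
      (∀ z, H.Adj α z → z = w ∨ z = β) ∧ (∀ z, H.Adj β z → z = w ∨ z = α) := by
  classical
  obtain ⟨f, hfE, hstar⟩ := hst
  have hsupp : ∀ u ∈ c.support, H.Reachable w u := fun u hu =>
    (c.takeUntil w hw).reachable.symm.trans (c.takeUntil u hu).reachable
  by_cases hfc : f ∈ c.edges
  case neg =>
    exfalso
    have hav : ∀ g ∈ c.edges, g ∉ ({f} : Set (Sym2 V)) := by
      intro g hg
      simp only [Set.mem_singleton_iff]
      rintro rfl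
      exact hfc hg
    set c' := c.toDeleteEdges ({f} : Set (Sym2 V)) hav with hc'def
    have hc' : c'.IsCycle := SimpleGraph.Walk.IsCycle.toDeleteEdges H ({f} : Set (Sym2 V)) hc hav
    have hsupp' : c'.support = c.support := SimpleGraph.Walk.support_transfer _ _
    obtain ⟨a, b, hab, hxa, hxb, has, hbs⟩ := cycle_three_distinct hc'
    have hxs : x ∈ c'.support := c'.start_mem_support
    obtain ⟨u, hu, huw⟩ : ∃ u ∈ c'.support, u ≠ w := by
      by_cases hwx : w = x
      · exact ⟨a, has, fun h => hxa (hwx ▸ h ▸ rfl)⟩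
      · exact ⟨x, hxs, fun h => hwx (h ▸ rfl)⟩
    obtain ⟨a', b', hab', h1', h2'⟩ := cycle_two_edges hc' hu
    have hreach : (H.deleteEdges {f}).Reachable w u := by
      have h1 : (H.deleteEdges {f}).Reachable x u := (c'.takeUntil u hu).reachable
      have h2 : (H.deleteEdges {f}).Reachable x w :=
        (c'.takeUntil w (by rw [hsupp']; exact hw)).reachable
      exact h2.symm.trans h1
    exact hab' (hstar u hreach huw a' b' (c'.adj_of_mem_edges h1') (c'.adj_of_mem_edges h2'))
  case pos =>
    induction f using Sym2.ind with
    | _ α β =>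
    have hAB : H.Adj α β := (SimpleGraph.mem_edgeSet H).mp hfE
    have hrAB := bridge_reach hc hfc
    have hdesc : ∀ {u₁ u₂ : V}, H.Reachable u₁ u₂ →
        (H.deleteEdges {s(α, β)}).Reachable u₁ u₂ :=
      fun h => reach_descend hrAB h
    have hsub : ∀ u ∈ c.support, u = w ∨ u = α ∨ u = β := by
      intro u hu
      by_contra hcon
      push_neg at hcon
      obtain ⟨hu1, hu2, hu3⟩ := hcon
      obtain ⟨a, b, hab, h1, h2⟩ := cycle_two_edges hc hu
      have e1 : s(u, a) ≠ s(α, β) := by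
        intro hh
        rcases Sym2.eq_iff.mp hh with ⟨h, _⟩ | ⟨h, _⟩
        · exact hu2 h
        · exact hu3 h
      have e2 : s(u, b) ≠ s(α, β) := by
        intro hh
        rcases Sym2.eq_iff.mp hh with ⟨h, _⟩ | ⟨h, _⟩
        · exact hu2 h
        · exact hu3 h
      have ha : (H.deleteEdges {s(α, β)}).Adj u a := del_adj.mpr ⟨c.adj_of_mem_edges h1, e1⟩
      have hb : (H.deleteEdges {s(α, β)}).Adj u b := del_adj.mpr ⟨c.adj_of_mem_edges h2, e2⟩
      exact hab (hstar u (hdesc (hsupp u hu)) hu1 a b ha hb)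
    have hαs : α ∈ c.support := SimpleGraph.Walk.fst_mem_support_of_mem_edges c hfc
    have hβs : β ∈ c.support := SimpleGraph.Walk.snd_mem_support_of_mem_edges c hfc
    obtain ⟨a, b, hab, hxa, hxb, has, hbs⟩ := cycle_three_distinct hc
    have hxs : x ∈ c.support := c.start_mem_support
    have collapse : ∀ p q : V, (∀ u ∈ c.support, u = p ∨ u = q) → False := fun p q hpq =>
      three_pigeon hxa hxb hab (hpq x hxs) (hpq a has) (hpq b hbs)
    have hwα : w ≠ α := by
      rintro rfl
      refine collapse w β fun u hu => ?_
      rcases hsub u hu with h | h | h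
      · exact Or.inl h
      · exact Or.inl h
      · exact Or.inr h
    have hwβ : w ≠ β := by
      rintro rfl
      refine collapse w α fun u hu => ?_
      rcases hsub u hu with h | h | h
      · exact Or.inl h
      · exact Or.inr h
      · exact Or.inl h
    have hαβ : α ≠ β := hAB.ne
    have hnbr : ∀ z, s(w, z) ∈ c.edges → z = α ∨ z = β := by
      intro z hz
      rcases hsub z (SimpleGraph.Walk.snd_mem_support_of_mem_edges c hz) with h | h | h
      · exact absurd h (c.adj_of_mem_edges hz).ne'
      · exact Or.inl h
      · exact Or.inr h
    obtain ⟨a', b', hab', h1', h2'⟩ := cycle_two_edges hc hw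
    have adjw : H.Adj w α ∧ H.Adj w β := by
      have ha' := c.adj_of_mem_edges h1'
      have hb' := c.adj_of_mem_edges h2'
      rcases hnbr a' h1' with h | h <;> rcases hnbr b' h2' with h' | h'
      · exact absurd (h.trans h'.symm) hab'
      · exact ⟨h ▸ ha', h' ▸ hb'⟩
      · exact ⟨h' ▸ hb', h ▸ ha'⟩
      · exact absurd (h.trans h'.symm) hab'
    have nα : ∀ z, H.Adj α z → z = w ∨ z = β := by
      intro z hz
      by_cases hzf : s(α, z) = s(α, β)
      · exact Or.inr (Sym2.congr_right.mp hzf)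
      · left
        have hzadj : (H.deleteEdges {s(α, β)}).Adj α z := del_adj.mpr ⟨hz, hzf⟩
        have hwadj : (H.deleteEdges {s(α, β)}).Adj α w := del_adj.mpr ⟨adjw.1.symm, by
          intro hh
          exact hwβ (Sym2.congr_right.mp hh)⟩
        exact hstar α (hdesc (hsupp α hαs)) hwα.symm z w hzadj hwadj
    have nβ : ∀ z, H.Adj β z → z = w ∨ z = α := by
      intro z hz
      by_cases hzf : s(β, z) = s(β, α)
      · exact Or.inr (Sym2.congr_right.mp hzf)
      · left
        have hzadj : (H.deleteEdges {s(α, β)}).Adj β z := del_adj.mpr ⟨hz, by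
          intro hh
          exact hzf (by rw [hh, Sym2.eq_swap])⟩
        have hwadj : (H.deleteEdges {s(α, β)}).Adj β w := del_adj.mpr ⟨adjw.2.symm, by
          intro hh
          rcases Sym2.eq_iff.mp hh with ⟨_, hw'⟩ | ⟨_, hw'⟩
          · exact hwβ hw'
          · exact hwα hw'⟩
        exact hstar β (hdesc (hsupp β hβs)) hwβ.symm z w hzadj hwadj
    exact ⟨α, β, hαβ, hwα, hwβ, hαs, hβs, adjw.1, adjw.2, hAB, nα, nβ⟩


/-- Package of an exact triangle component. -/
lemma MLlem {H : SimpleGraph V} {v x : V}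
    (hP : ∀ w, H.Reachable v w → w ≠ v → Starifiable H w)
    {c : H.Walk x x} (hc : c.IsCycle) (hr : H.Reachable v x) :
    ∃ s t : V, s ≠ t ∧ v ≠ s ∧ v ≠ t ∧ H.Adj v s ∧ H.Adj v t ∧ H.Adj s t ∧
      (∀ z, H.Adj v z → z = s ∨ z = t) ∧ (∀ z, H.Adj s z → z = v ∨ z = t) ∧
      (∀ z, H.Adj t z → z = v ∨ z = s) := by
  classical
  have hsupp : ∀ u ∈ c.support, H.Reachable v u := fun u hu =>
    hr.trans (c.takeUntil u hu).reachable
  obtain ⟨a, b, hab, hxa, hxb, has, hbs⟩ := cycle_three_distinct hc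
  obtain ⟨w0, hw0s, hw0v⟩ : ∃ w0 ∈ c.support, w0 ≠ v := by
    by_cases hvx : v = x
    · exact ⟨a, has, fun h => hxa (by rw [hvx] at h; rw [h])⟩
    · exact ⟨x, c.start_mem_support, fun h => hvx h.symm⟩
  obtain ⟨α, β, hαβ, hwα, hwβ, hαs, hβs, adjwα, adjwβ, adjαβ, nα, nβ⟩ :=
    Qlem hc hw0s (hP w0 (hsupp w0 hw0s) hw0v)
  by_cases hvα : v = α
  · subst hvα
    obtain ⟨γ, δ, hγδ, _, _, _, _, adjβγ, adjβδ, _, nγ, nδ⟩ :=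
      Qlem hc hβs (hP β (hsupp β hβs) (fun h => hαβ h.symm))
    have hγm := nβ γ adjβγ
    have hδm := nβ δ adjβδ
    have nw0 : ∀ z, H.Adj w0 z → z = v ∨ z = β := by
      rcases hγm with rfl | rfl
      · -- γ = w0
        intro z hz
        rcases nγ z hz with h | h
        · exact Or.inr h
        · rcases hδm with rfl | rfl
          · exact absurd rfl hγδ
          · exact Or.inl h
      · -- γ = v (as α = v)
        rcases hδm with rfl | rfl
        · intro z hz
          rcases nδ z hz with h | h
          · exact Or.inr h
          · exact Or.inl h
        · exact absurd rfl hγδ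
    refine ⟨w0, β, hwβ, hw0v.symm, hαβ, adjwα.symm, adjαβ, adjwβ, ?_, nw0, ?_⟩
    · exact nα
    · intro z hz
      rcases nβ z hz with h | h
      · exact Or.inr h
      · exact Or.inl h
  · by_cases hvβ : v = β
    · subst hvβ
      obtain ⟨γ, δ, hγδ, _, _, _, _, adjαγ, adjαδ, _, nγ, nδ⟩ :=
        Qlem hc hαs (hP α (hsupp α hαs) (fun h => hvα h.symm))
      have hγm := nα γ adjαγ
      have hδm := nα δ adjαδ
      have nw0 : ∀ z, H.Adj w0 z → z = v ∨ z = α := by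
        rcases hγm with rfl | rfl
        · intro z hz
          rcases nγ z hz with h | h
          · exact Or.inr h
          · rcases hδm with rfl | rfl
            · exact absurd rfl hγδ
            · exact Or.inl h
        · rcases hδm with rfl | rfl
          · intro z hz
            rcases nδ z hz with h | h
            · exact Or.inr h
            · exact Or.inl h
          · exact absurd rfl hγδ
      refine ⟨w0, α, hwα, hw0v.symm, hvα, adjwβ.symm, adjαβ.symm, adjwα, ?_, nw0, ?_⟩
      · intro z hz
        rcases nβ z hz with h | h
        · exact Or.inl h
        · exact Or.inr h
      · intro z hz
        rcases nα z hz with h | h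
        · exact Or.inr h
        · exact Or.inl h
    · exfalso
      obtain ⟨γ, δ, hγδ, _, _, _, _, adjαγ, adjαδ, _, nγ, nδ⟩ :=
        Qlem hc hαs (hP α (hsupp α hαs) (fun h => hvα h.symm))
      have hγm := nα γ adjαγ
      have hδm := nα δ adjαδ
      have nw0 : ∀ z, H.Adj w0 z → z = α ∨ z = β := by
        rcases hγm with rfl | rfl
        · intro z hz
          rcases nγ z hz with h | h
          · exact Or.inl h
          · rcases hδm with rfl | rfl
            · exact absurd rfl hγδ
            · exact Or.inr h
        · rcases hδm with rfl | rfl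
          · intro z hz
            rcases nδ z hz with h | h
            · exact Or.inl h
            · exact Or.inr h
          · exact absurd rfl hγδ
      have hclosed : ∀ u ∈ ({w0, α, β} : Set V), ∀ z, H.Adj u z → z ∈ ({w0, α, β} : Set V) := by
        intro u hu z hz
        simp only [Set.mem_insert_iff, Set.mem_singleton_iff] at hu ⊢
        rcases hu with rfl | rfl | rfl
        · rcases nw0 z hz with h | h
          · exact Or.inr (Or.inl h)
          · exact Or.inr (Or.inr h)
        · rcases nα z hz with h | h
          · exact Or.inl h
          · exact Or.inr (Or.inr h)
        · rcases nβ z hz with h | h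
          · exact Or.inl h
          · exact Or.inr (Or.inl h)
      have hvS : v ∈ ({w0, α, β} : Set V) :=
        closed_comp hclosed (by simp : w0 ∈ ({w0, α, β} : Set V))
          (hsupp w0 hw0s).symm
      simp only [Set.mem_insert_iff, Set.mem_singleton_iff] at hvS
      rcases hvS with h | h | h
      · exact hw0v h.symm
      · exact hvα h
      · exact hvβ h


def Pend (G : SimpleGraph V) (x s t y : V) : Prop :=
  x ≠ s ∧ x ≠ t ∧ s ≠ t ∧ y ≠ x ∧ y ≠ s ∧ y ≠ t ∧
  G.Adj x s ∧ G.Adj x t ∧ G.Adj s t ∧ G.Adj x y ∧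
  (∀ z, G.Adj x z → z = s ∨ z = t ∨ z = y) ∧
  (∀ z, G.Adj s z → z = x ∨ z = t) ∧
  (∀ z, G.Adj t z → z = x ∨ z = s)

lemma pend_of_exact {G : SimpleGraph V} {e1 : Sym2 V} {x s t y : V}
    (he1 : e1 = s(x, y)) (hE : e1 ∈ G.edgeSet)
    (hyx : y ≠ x) (hys : y ≠ s) (hyt : y ≠ t)
    (hxs : x ≠ s) (hxt : x ≠ t) (hst : s ≠ t)
    (axs : (G.deleteEdges {e1}).Adj x s) (axt : (G.deleteEdges {e1}).Adj x t)
    (ast : (G.deleteEdges {e1}).Adj s t)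
    (nx : ∀ z, (G.deleteEdges {e1}).Adj x z → z = s ∨ z = t)
    (ns : ∀ z, (G.deleteEdges {e1}).Adj s z → z = x ∨ z = t)
    (nt : ∀ z, (G.deleteEdges {e1}).Adj t z → z = x ∨ z = s) : Pend G x s t y := by
  subst he1
  have hadjxy : G.Adj x y := (SimpleGraph.mem_edgeSet G).mp hE
  refine ⟨hxs, hxt, hst, hyx, hys, hyt, (del_adj.mp axs).1, (del_adj.mp axt).1,
    (del_adj.mp ast).1, hadjxy, ?_, ?_, ?_⟩
  · intro z hz
    by_cases h : s(x, z) = s(x, y)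
    · exact Or.inr (Or.inr (Sym2.congr_right.mp h))
    · rcases nx z (del_adj.mpr ⟨hz, h⟩) with h' | h'
      · exact Or.inl h'
      · exact Or.inr (Or.inl h')
  · intro z hz
    by_cases h : s(s, z) = s(x, y)
    · exfalso
      rcases Sym2.eq_iff.mp h with ⟨h1, _⟩ | ⟨h1, _⟩
      · exact hxs h1.symm
      · exact hys h1.symm
    · exact ns z (del_adj.mpr ⟨hz, h⟩)
  · intro z hz
    by_cases h : s(t, z) = s(x, y)
    · exfalso
      rcases Sym2.eq_iff.mp h with ⟨h1, _⟩ | ⟨h1, _⟩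
      · exact hxt h1.symm
      · exact hyt h1.symm
    · exact nt z (del_adj.mpr ⟨hz, h⟩)

lemma pendant {G : SimpleGraph V} (hconn : G.Connected)
    (hcap : ∀ u, CapturedIn G u 3)
    {c₁ c₂ : V} {p₁ : G.Walk c₁ c₁} {p₂ : G.Walk c₂ c₂}
    (h₁ : p₁.IsCycle) (h₂ : p₂.IsCycle)
    (hne : {e | e ∈ p₁.edges} ≠ {e | e ∈ p₂.edges})
    {v x0 : V} {c : G.Walk x0 x0} (hcyc : c.IsCycle) (hv : v ∈ c.support) :
    ∃ x s t y, (v = x ∨ v = s ∨ v = t) ∧ Pend G x s t y := by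
  classical
  have hvadj : ∃ u, G.Adj v u := by
    obtain ⟨a, b, hab, h1, _⟩ := cycle_two_edges hcyc hv
    exact ⟨a, c.adj_of_mem_edges h1⟩
  rcases cap3_main (hcap v) with hiso | ⟨e1, he1, hP0⟩
  · exact absurd hvadj (by simpa using hiso)
  have hP : ∀ w, (G.deleteEdges {e1}).Reachable v w → w ≠ v →
      Starifiable (G.deleteEdges {e1}) w := by
    intro w hw hwv
    rcases hP0 w hw hwv with hiso' | hst
    · obtain ⟨u, hu⟩ := reach_ne_exists_adj hw (fun h => hwv h.symm)
      exact absurd hu (hiso' u)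
    · exact hst
  induction e1 using Sym2.ind with
  | _ p q =>
  have hpq : G.Adj p q := (SimpleGraph.mem_edgeSet G).mp he1
  have hML : ∃ s t : V, s ≠ t ∧ v ≠ s ∧ v ≠ t ∧
      (G.deleteEdges {s(p, q)}).Adj v s ∧ (G.deleteEdges {s(p, q)}).Adj v t ∧
      (G.deleteEdges {s(p, q)}).Adj s t ∧
      (∀ z, (G.deleteEdges {s(p, q)}).Adj v z → z = s ∨ z = t) ∧
      (∀ z, (G.deleteEdges {s(p, q)}).Adj s z → z = v ∨ z = t) ∧
      (∀ z, (G.deleteEdges {s(p, q)}).Adj t z → z = v ∨ z = s) := by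
    by_cases he1c : s(p, q) ∈ c.edges
    · have hrAB := bridge_reach hcyc he1c
      obtain ⟨z, c3, hc3⟩ := exists_cycle_deleteEdge h₁ h₂ hne s(p, q)
      exact MLlem hP hc3 (reach_descend hrAB (hconn.preconnected v z))
    · have hav : ∀ g ∈ c.edges, g ∉ ({s(p, q)} : Set (Sym2 V)) := by
        intro g hg
        simp only [Set.mem_singleton_iff]
        rintro rfl
        exact he1c hg
      have hc' : (c.toDeleteEdges ({s(p, q)} : Set (Sym2 V)) hav).IsCycle :=
        SimpleGraph.Walk.IsCycle.toDeleteEdges G ({s(p, q)} : Set (Sym2 V)) hcyc hav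
      have hv' : v ∈ (c.toDeleteEdges ({s(p, q)} : Set (Sym2 V)) hav).support := by
        rw [SimpleGraph.Walk.support_transfer]
        exact hv
      exact MLlem hP hc'
        ((c.toDeleteEdges ({s(p, q)} : Set (Sym2 V)) hav).takeUntil v hv').reachable.symm
  obtain ⟨s, t, hst, hvs, hvt, avs, avt, ast, nv, ns, nt⟩ := hML
  have hHadj : ∀ a b : V, (a = v ∨ a = s ∨ a = t) → (b = v ∨ b = s ∨ b = t) → a ≠ b →
      (G.deleteEdges {s(p, q)}).Adj a b := by
    rintro a b (rfl | rfl | rfl) (rfl | rfl | rfl) hab <;>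
      first
        | exact absurd rfl hab
        | exact avs
        | exact avt
        | exact ast
        | exact avs.symm
        | exact avt.symm
        | exact ast.symm
  by_cases hpT : p = v ∨ p = s ∨ p = t
  · by_cases hqT : q = v ∨ q = s ∨ q = t
    · exfalso
      have := hHadj p q hpT hqT hpq.ne
      exact (del_adj.mp this).2 rfl
    · push_neg at hqT
      obtain ⟨hq1, hq2, hq3⟩ := hqT
      have hqv : q ≠ v := hq1
      rcases hpT with rfl | rfl | rfl
      · exact ⟨p, s, t, q, Or.inl rfl,
          pend_of_exact rfl he1 hqv hq2 hq3 hvs hvt hst avs avt ast nv ns nt⟩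
      · refine ⟨p, v, t, q, Or.inr (Or.inl rfl), ?_⟩
        refine pend_of_exact rfl he1 hq2 hqv hq3 (fun h => hvs h.symm) hst hvt
          avs.symm ast avt ?_ ?_ ?_
        · intro z hz
          rcases ns z hz with h | h
          · exact Or.inl h
          · exact Or.inr h
        · exact nv
        · intro z hz
          rcases nt z hz with h | h
          · exact Or.inr h
          · exact Or.inl h
      · refine ⟨p, v, s, q, Or.inr (Or.inl rfl), ?_⟩
        refine pend_of_exact rfl he1 hq3 hqv hq2 (fun h => hvt h.symm) (fun h => hst h.symm)
          hvs avt.symm ast.symm avs ?_ ?_ ?_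
        · intro z hz
          rcases nt z hz with h | h
          · exact Or.inl h
          · exact Or.inr h
        · intro z hz
          rcases nv z hz with h | h
          · exact Or.inr h
          · exact Or.inl h
        · intro z hz
          rcases ns z hz with h | h
          · exact Or.inr h
          · exact Or.inl h
  · by_cases hqT : q = v ∨ q = s ∨ q = t
    · push_neg at hpT
      obtain ⟨hp1, hp2, hp3⟩ := hpT
      rcases hqT with rfl | rfl | rfl
      · exact ⟨q, s, t, p, Or.inl rfl,
          pend_of_exact (Sym2.eq_swap) he1 hp1 hp2 hp3 hvs hvt hst avs avt ast nv ns nt⟩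
      · refine ⟨q, v, t, p, Or.inr (Or.inl rfl), ?_⟩
        refine pend_of_exact (Sym2.eq_swap) he1 hp2 hp1 hp3 (fun h => hvs h.symm) hst hvt
          avs.symm ast avt ?_ ?_ ?_
        · intro z hz
          rcases ns z hz with h | h
          · exact Or.inl h
          · exact Or.inr h
        · exact nv
        · intro z hz
          rcases nt z hz with h | h
          · exact Or.inr h
          · exact Or.inl h
      · refine ⟨q, v, s, p, Or.inr (Or.inl rfl), ?_⟩
        refine pend_of_exact (Sym2.eq_swap) he1 hp3 hp1 hp2 (fun h => hvt h.symm)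
          (fun h => hst h.symm) hvs avt.symm ast.symm avs ?_ ?_ ?_
        · intro z hz
          rcases nt z hz with h | h
          · exact Or.inl h
          · exact Or.inr h
        · intro z hz
          rcases nv z hz with h | h
          · exact Or.inr h
          · exact Or.inl h
        · intro z hz
          rcases ns z hz with h | h
          · exact Or.inr h
          · exact Or.inl h
    · exfalso
      push_neg at hpT hqT
      have hclosed : ∀ u ∈ ({v, s, t} : Set V), ∀ z, G.Adj u z → z ∈ ({v, s, t} : Set V) := by
        intro u hu z hz
        by_cases hze : s(u, z) = s(p, q)
        · exfalso
          simp only [Set.mem_insert_iff, Set.mem_singleton_iff] at hu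
          rcases Sym2.eq_iff.mp hze with ⟨h1, _⟩ | ⟨h1, _⟩
          · rcases hu with rfl | rfl | rfl
            · exact hpT.1 h1.symm
            · exact hpT.2.1 h1.symm
            · exact hpT.2.2 h1.symm
          · rcases hu with rfl | rfl | rfl
            · exact hqT.1 h1.symm
            · exact hqT.2.1 h1.symm
            · exact hqT.2.2 h1.symm
        · have hz' : (G.deleteEdges {s(p, q)}).Adj u z := del_adj.mpr ⟨hz, hze⟩
          simp only [Set.mem_insert_iff, Set.mem_singleton_iff] at hu ⊢
          rcases hu with rfl | rfl | rfl
          · rcases nv z hz' with h | h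
            · exact Or.inr (Or.inl h)
            · exact Or.inr (Or.inr h)
          · rcases ns z hz' with h | h
            · exact Or.inl h
            · exact Or.inr (Or.inr h)
          · rcases nt z hz' with h | h
            · exact Or.inl h
            · exact Or.inr (Or.inl h)
      have hpS : p ∈ ({v, s, t} : Set V) :=
        closed_comp hclosed (by simp : v ∈ ({v, s, t} : Set V)) (hconn.preconnected v p)
      simp only [Set.mem_insert_iff, Set.mem_singleton_iff] at hpS
      rcases hpS with h | h | h
      · exact hpT.1 h
      · exact hpT.2.1 h
      · exact hpT.2.2 h


lemma pend_closure' {G : SimpleGraph V} {x s t y : V} (P : Pend G x s t y) :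
    ∀ u w, (u = x ∨ u = s ∨ u = t) → (G.deleteEdges {s(x, y)}).Reachable u w →
      w = x ∨ w = s ∨ w = t := by
  obtain ⟨hxs, hxt, hst, hyx, hys, hyt, axs, axt, ast, axy, nx, ns, nt⟩ := P
  intro u w hu hw
  have hS : ∀ u' ∈ ({x, s, t} : Set V), ∀ z, (G.deleteEdges {s(x, y)}).Adj u' z →
      z ∈ ({x, s, t} : Set V) := by
    intro u' hu' z hz
    obtain ⟨hG, hne⟩ := del_adj.mp hz
    simp only [Set.mem_insert_iff, Set.mem_singleton_iff] at hu' ⊢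
    rcases hu' with rfl | rfl | rfl
    · rcases nx z hG with h | h | h
      · exact Or.inr (Or.inl h)
      · exact Or.inr (Or.inr h)
      · exact absurd (by rw [h]) hne
    · rcases ns z hG with h | h
      · exact Or.inl h
      · exact Or.inr (Or.inr h)
    · rcases nt z hG with h | h
      · exact Or.inl h
      · exact Or.inr (Or.inl h)
  have := closed_comp hS (by simpa using hu : u ∈ ({x, s, t} : Set V)) hw
  simpa using this

lemma pend_closure {G : SimpleGraph V} {x s t y : V} (P : Pend G x s t y) :
    ∀ u, (G.deleteEdges {s(x, y)}).Reachable x u → u = x ∨ u = s ∨ u = t := by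
  obtain ⟨hxs, hxt, hst, hyx, hys, hyt, axs, axt, ast, axy, nx, ns, nt⟩ := P
  intro u hu
  have hS : ∀ u' ∈ ({x, s, t} : Set V), ∀ z, (G.deleteEdges {s(x, y)}).Adj u' z →
      z ∈ ({x, s, t} : Set V) := by
    intro u' hu' z hz
    obtain ⟨hG, hne⟩ := del_adj.mp hz
    simp only [Set.mem_insert_iff, Set.mem_singleton_iff] at hu' ⊢
    rcases hu' with rfl | rfl | rfl
    · rcases nx z hG with h | h | h
      · exact Or.inr (Or.inl h)
      · exact Or.inr (Or.inr h)
      · exact absurd (by rw [h]) hne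
    · rcases ns z hG with h | h
      · exact Or.inl h
      · exact Or.inr (Or.inr h)
    · rcases nt z hG with h | h
      · exact Or.inl h
      · exact Or.inr (Or.inl h)
  have := closed_comp hS (by simp : x ∈ ({x, s, t} : Set V)) hu
  simpa using this

lemma pend_other {G : SimpleGraph V} {x s t y : V} (P : Pend G x s t y) {u : V}
    (hu : u = x ∨ u = s ∨ u = t) :
    ∃ a b, G.Adj u a ∧ G.Adj u b ∧ G.Adj a b ∧ a ≠ b ∧
      (∀ z, (z = u ∨ z = a ∨ z = b) ↔ (z = x ∨ z = s ∨ z = t)) := by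
  obtain ⟨hxs, hxt, hst, hyx, hys, hyt, axs, axt, ast, axy, nx, ns, nt⟩ := P
  rcases hu with rfl | rfl | rfl
  · exact ⟨s, t, axs, axt, ast, hst, fun z => by tauto⟩
  · exact ⟨x, t, axs.symm, ast, axt, hxt, fun z => by tauto⟩
  · exact ⟨x, s, axt.symm, ast.symm, axs, hxs, fun z => by tauto⟩

lemma pend_disjoint {G : SimpleGraph V} {x1 s1 t1 y1 x2 s2 t2 y2 v1 : V}
    (P1 : Pend G x1 s1 t1 y1) (P2 : Pend G x2 s2 t2 y2)
    (hv1 : v1 = x2 ∨ v1 = s2 ∨ v1 = t2) (hv1T1 : ¬(v1 = x1 ∨ v1 = s1 ∨ v1 = t1)) :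
    ∀ u, (u = x2 ∨ u = s2 ∨ u = t2) → ¬(u = x1 ∨ u = s1 ∨ u = t1) := by
  intro u hu2 hu1
  obtain ⟨a, b, hua, hub, habadj, hab, hiff⟩ := pend_other P2 hu2
  have hsubT1 : (a = x1 ∨ a = s1 ∨ a = t1) → (b = x1 ∨ b = s1 ∨ b = t1) → False := by
    intro haT1 hbT1
    have hv1' := (hiff v1).mpr hv1
    rcases hv1' with h | h | h
    · exact hv1T1 (h ▸ hu1)
    · exact hv1T1 (h ▸ haT1)
    · exact hv1T1 (h ▸ hbT1)
  obtain ⟨hxs, hxt, hst, hyx, hys, hyt, axs, axt, ast, axy, nx, ns, nt⟩ := P1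
  have hy1adj : ∀ w, G.Adj w y1 → (w = s1 ∨ w = t1) → False := by
    rintro w hw (rfl | rfl)
    · rcases ns y1 hw with h | h
      · exact hyx h
      · exact hyt h
    · rcases nt y1 hw with h | h
      · exact hyx h
      · exact hys h
  rcases hu1 with rfl | rfl | rfl
  · rcases nx a hua with h | h | h <;> rcases nx b hub with h' | h' | h'
    · exact hab (h.trans h'.symm)
    · exact hsubT1 (Or.inr (Or.inl h)) (Or.inr (Or.inr h'))
    · exact hy1adj a (h' ▸ habadj) (Or.inl h)
    · exact hsubT1 (Or.inr (Or.inr h)) (Or.inr (Or.inl h'))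
    · exact hab (h.trans h'.symm)
    · exact hy1adj a (h' ▸ habadj) (Or.inr h)
    · exact hy1adj b (h ▸ habadj.symm) (Or.inl h')
    · exact hy1adj b (h ▸ habadj.symm) (Or.inr h')
    · exact hab (h.trans h'.symm)
  · rcases ns a hua with h | h <;> rcases ns b hub with h' | h'
    · exact hab (h.trans h'.symm)
    · exact hsubT1 (Or.inl h) (Or.inr (Or.inr h'))
    · exact hsubT1 (Or.inr (Or.inr h)) (Or.inl h')
    · exact hab (h.trans h'.symm)
  · rcases nt a hua with h | h <;> rcases nt b hub with h' | h'
    · exact hab (h.trans h'.symm)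
    · exact hsubT1 (Or.inl h) (Or.inr (Or.inl h'))
    · exact hsubT1 (Or.inr (Or.inl h)) (Or.inl h')
    · exact hab (h.trans h'.symm)

lemma cap3_of_catNum {G : SimpleGraph V} (h3 : catNum G = 3) :
    ∀ v, CapturedIn G v 3 := by
  intro v
  have hle : catVNum G v ≤ 3 := by
    rw [← h3]
    exact le_iSup (fun v => catVNum G v) v
  by_contra hcap
  have h4 : (4 : ℕ∞) ≤ sInf (Nat.cast '' {m : ℕ | CapturedIn G v m}) := by
    apply le_sInf
    rintro x ⟨m, hm, rfl⟩
    by_contra hlt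
    push_neg at hlt
    have hm3 : m ≤ 3 := by
      have : (m : ℕ∞) < (4 : ℕ) := by exact_mod_cast hlt
      exact_mod_cast Nat.lt_succ_iff.mp (by exact_mod_cast this)
    exact hcap (capturedIn_mono hm hm3)
  rw [catVNum] at hle
  have := le_trans h4 hle
  norm_num at this

lemma bad_case {G : SimpleGraph V} (hconn : G.Connected) (hcap : ∀ u, CapturedIn G u 3)
    {x1 s1 t1 y1 x2 s2 t2 y2 : V}
    (P1 : Pend G x1 s1 t1 y1) (P2 : Pend G x2 s2 t2 y2)
    (hdisj : ∀ u, (u = x2 ∨ u = s2 ∨ u = t2) → ¬(u = x1 ∨ u = s1 ∨ u = t1))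
    (hy2T1 : ¬(y2 = x1 ∨ y2 = s1 ∨ y2 = t1)) : False := by
  classical
  have P1' := P1
  have P2' := P2
  obtain ⟨hx1s1, hx1t1, hs1t1, hy1x1, hy1s1, hy1t1, ax1s1, ax1t1, as1t1, ax1y1,
    nx1, ns1, nt1⟩ := P1'
  obtain ⟨hx2s2, hx2t2, hs2t2, hy2x2, hy2s2, hy2t2, ax2s2, ax2t2, as2t2, ax2y2,
    nx2, ns2, nt2⟩ := P2'
  have hy1T2 : ¬(y1 = x2 ∨ y1 = s2 ∨ y1 = t2) := by
    rintro (h | h | h)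
    · have hadj : G.Adj x2 x1 := h ▸ ax1y1.symm
      rcases nx2 x1 hadj with h' | h' | h'
      · exact hdisj s2 (Or.inr (Or.inl rfl)) (Or.inl h'.symm)
      · exact hdisj t2 (Or.inr (Or.inr rfl)) (Or.inl h'.symm)
      · exact hy2T1 (Or.inl h'.symm)
    · have hadj : G.Adj s2 x1 := h ▸ ax1y1.symm
      rcases ns2 x1 hadj with h' | h'
      · exact hdisj x2 (Or.inl rfl) (Or.inl h'.symm)
      · exact hdisj t2 (Or.inr (Or.inr rfl)) (Or.inl h'.symm)
    · have hadj : G.Adj t2 x1 := h ▸ ax1y1.symm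
      rcases nt2 x1 hadj with h' | h'
      · exact hdisj x2 (Or.inl rfl) (Or.inl h'.symm)
      · exact hdisj s2 (Or.inr (Or.inl rfl)) (Or.inl h'.symm)
  have hy1T1 : ¬(y1 = x1 ∨ y1 = s1 ∨ y1 = t1) := by
    rintro (h | h | h)
    · exact hy1x1 h
    · exact hy1s1 h
    · exact hy1t1 h
  rcases cap3_main (hcap y1) with hiso | ⟨f1, hf1, hQ0⟩
  · exact (hiso x1) ax1y1.symm
  by_cases hg : f1 = s(x1, s1) ∨ f1 = s(s1, t1) ∨ f1 = s(t1, x1) ∨ f1 = s(x1, y1)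
  · -- f1 is in the first gadget; use the second triangle
    have hy2Z : (G.deleteEdges {s(x1, y1)}).Reachable y1 y2 := by
      rcases reach_deleteEdge_cases (p := x1) (q := y1)
          (hconn.preconnected y2 x1) with hr | hr | hr
      · exact absurd (pend_closure P1 y2 hr.symm) hy2T1
      · exact absurd (pend_closure P1 y2 hr.symm) hy2T1
      · exact hr.symm
    obtain ⟨W0⟩ := hy2Z
    have hT1notin : ∀ u, (u = x1 ∨ u = s1 ∨ u = t1) → u ∉ W0.support := by
      intro u hu husup
      have hru : (G.deleteEdges {s(x1, y1)}).Reachable u y1 :=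
        (W0.takeUntil u husup).reachable.symm
      exact hy1T1 (pend_closure' P1 u y1 hu hru)
    have hW0f : ∀ g ∈ W0.edges, g ∈ (G.deleteEdges {f1}).edgeSet := by
      intro g hgW
      have hg1 : g ∈ (G.deleteEdges {s(x1, y1)}).edgeSet := W0.edges_subset_edgeSet hgW
      rw [SimpleGraph.edgeSet_deleteEdges] at hg1 ⊢
      refine ⟨hg1.1, ?_⟩
      simp only [Set.mem_singleton_iff]
      rintro rfl
      rcases hg with rfl | rfl | rfl | rfl
      · exact hT1notin x1 (Or.inl rfl) (SimpleGraph.Walk.fst_mem_support_of_mem_edges W0 hgW)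
      · exact hT1notin s1 (Or.inr (Or.inl rfl))
          (SimpleGraph.Walk.fst_mem_support_of_mem_edges W0 hgW)
      · exact hT1notin t1 (Or.inr (Or.inr rfl))
          (SimpleGraph.Walk.fst_mem_support_of_mem_edges W0 hgW)
      · exact hg1.2 rfl
    have hry2 : (G.deleteEdges {f1}).Reachable y1 y2 := reach_of_edges_subset W0 hW0f
    have hT2f1 : ∀ a b : V, (a = x2 ∨ a = s2 ∨ a = t2) → s(a, b) ≠ f1 := by
      intro a b ha hh
      have haT1 : ¬(a = x1 ∨ a = s1 ∨ a = t1) := hdisj a ha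
      have hay1 : a ≠ y1 := fun h => hy1T2 (by rw [← h]; exact ha)
      rcases hg with rfl | rfl | rfl | rfl <;>
        rcases Sym2.eq_iff.mp hh with ⟨h1, _⟩ | ⟨h1, _⟩
      · exact haT1 (Or.inl h1)
      · exact haT1 (Or.inr (Or.inl h1))
      · exact haT1 (Or.inr (Or.inl h1))
      · exact haT1 (Or.inr (Or.inr h1))
      · exact haT1 (Or.inr (Or.inr h1))
      · exact haT1 (Or.inl h1)
      · exact haT1 (Or.inl h1)
      · exact hay1 h1
    have hax2y2' : (G.deleteEdges {f1}).Adj y2 x2 := del_adj.mpr ⟨ax2y2.symm, by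
      rw [Sym2.eq_swap]
      exact hT2f1 x2 y2 (Or.inl rfl)⟩
    have hax2s2' : (G.deleteEdges {f1}).Adj x2 s2 :=
      del_adj.mpr ⟨ax2s2, hT2f1 x2 s2 (Or.inl rfl)⟩
    have hreach : (G.deleteEdges {f1}).Reachable y1 s2 :=
      (hry2.trans hax2y2'.reachable).trans hax2s2'.reachable
    have hs2y1 : s2 ≠ y1 := fun h => hy1T2 (Or.inr (Or.inl h.symm))
    rcases hQ0 s2 hreach hs2y1 with hiso' | hstar
    · exact (hiso' x2) hax2s2'.symm
    · refine star_contra hax2s2'.symm ?_ ?_ ?_ hy2s2 hy2t2 hstar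
      · exact del_adj.mpr ⟨as2t2, hT2f1 s2 t2 (Or.inr (Or.inl rfl))⟩
      · exact del_adj.mpr ⟨ax2t2, hT2f1 x2 t2 (Or.inl rfl)⟩
      · exact del_adj.mpr ⟨ax2y2, hT2f1 x2 y2 (Or.inl rfl)⟩
  · -- f1 misses the first gadget entirely
    push_neg at hg
    obtain ⟨hg1, hg2, hg3, hg4⟩ := hg
    have hadj1 : (G.deleteEdges {f1}).Adj y1 x1 := del_adj.mpr ⟨ax1y1.symm, by
      rw [Sym2.eq_swap]
      exact fun hh => hg4 hh.symm⟩
    have hadj2 : (G.deleteEdges {f1}).Adj x1 s1 :=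
      del_adj.mpr ⟨ax1s1, fun hh => hg1 hh.symm⟩
    have hreach : (G.deleteEdges {f1}).Reachable y1 s1 :=
      hadj1.reachable.trans hadj2.reachable
    rcases hQ0 s1 hreach (Ne.symm hy1s1) with hiso' | hstar
    · exact (hiso' x1) hadj2.symm
    · refine star_contra hadj2.symm ?_ ?_ ?_ hy1s1 hy1t1 hstar
      · exact del_adj.mpr ⟨as1t1, fun hh => hg2 hh.symm⟩
      · exact del_adj.mpr ⟨ax1t1, fun hh => hg3 (by rw [← hh, Sym2.eq_swap])⟩
      · exact del_adj.mpr ⟨ax1y1, fun hh => hg4 hh.symm⟩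

end CatAux


set_option maxHeartbeats 2000000 in
theorem two_cycles_catNum_three' {V : Type u} (G : SimpleGraph V) (hc : G.Connected)
    (h : ∃ (c₁ c₂ : V) (p₁ : G.Walk c₁ c₁) (p₂ : G.Walk c₂ c₂),
      p₁.IsCycle ∧ p₂.IsCycle ∧ {e | e ∈ p₁.edges} ≠ {e | e ∈ p₂.edges})
    (h3 : catNum G = 3) :
    Nonempty (G ≃g twoTrianglesBridge) := by
  classical
  obtain ⟨c₁, c₂, p₁, p₂, hc1, hc2, hneq⟩ := h
  have hcap : ∀ v, CapturedIn G v 3 := CatAux.cap3_of_catNum h3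
  obtain ⟨x1, s1, t1, y1, hv0mem, P1⟩ :=
    CatAux.pendant hc hcap hc1 hc2 hneq hc1 p₁.start_mem_support
  have P1' := P1
  obtain ⟨hx1s1, hx1t1, hs1t1, hy1x1, hy1s1, hy1t1, ax1s1, ax1t1, as1t1, ax1y1,
    nx1, ns1, nt1⟩ := P1'
  obtain ⟨z2, cZ, hcZ⟩ := CatAux.exists_cycle_deleteEdge hc1 hc2 hneq s(s1, t1)
  have hs1n : s1 ∉ cZ.support := by
    intro hs
    obtain ⟨a, b, hab, h1, h2⟩ := CatAux.cycle_two_edges hcZ hs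
    have key : ∀ z, s(s1, z) ∈ cZ.edges → z = x1 := by
      intro z hz
      obtain ⟨hG, hne⟩ := CatAux.del_adj.mp (cZ.adj_of_mem_edges hz)
      rcases ns1 z hG with h | h
      · exact h
      · exact absurd (by rw [h]) hne
    exact hab ((key a h1).trans (key b h2).symm)
  have ht1n : t1 ∉ cZ.support := by
    intro hs
    obtain ⟨a, b, hab, h1, h2⟩ := CatAux.cycle_two_edges hcZ hs
    have key : ∀ z, s(t1, z) ∈ cZ.edges → z = x1 := by
      intro z hz
      obtain ⟨hG, hne⟩ := CatAux.del_adj.mp (cZ.adj_of_mem_edges hz)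
      rcases nt1 z hG with h | h
      · exact h
      · exact absurd (by rw [h, Sym2.eq_swap]) hne
    exact hab ((key a h1).trans (key b h2).symm)
  have hx1n : x1 ∉ cZ.support := by
    intro hs
    obtain ⟨a, b, hab, h1, h2⟩ := CatAux.cycle_two_edges hcZ hs
    have key : ∀ z, s(x1, z) ∈ cZ.edges → z = y1 := by
      intro z hz
      obtain ⟨hG, hne⟩ := CatAux.del_adj.mp (cZ.adj_of_mem_edges hz)
      rcases nx1 z hG with h | h | h
      · exact absurd (h ▸ SimpleGraph.Walk.snd_mem_support_of_mem_edges cZ hz) hs1n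
      · exact absurd (h ▸ SimpleGraph.Walk.snd_mem_support_of_mem_edges cZ hz) ht1n
      · exact h
    exact hab ((key a h1).trans (key b h2).symm)
  have hedgesZ : ∀ f ∈ cZ.edges, f ∈ G.edgeSet := fun f hf =>
    SimpleGraph.edgeSet_mono (SimpleGraph.deleteEdges_le _) (cZ.edges_subset_edgeSet hf)
  have hcG : (cZ.transfer G hedgesZ).IsCycle := hcZ.transfer hedgesZ
  obtain ⟨x2, s2, t2, y2, hv1mem, P2⟩ :=
    CatAux.pendant hc hcap hc1 hc2 hneq hcG (cZ.transfer G hedgesZ).start_mem_support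
  have hz2sup : z2 ∈ cZ.support := cZ.start_mem_support
  have hv1T1 : ¬(z2 = x1 ∨ z2 = s1 ∨ z2 = t1) := by
    rintro (rfl | rfl | rfl)
    · exact hx1n hz2sup
    · exact hs1n hz2sup
    · exact ht1n hz2sup
  have P2' := P2
  obtain ⟨hx2s2, hx2t2, hs2t2, hy2x2, hy2s2, hy2t2, ax2s2, ax2t2, as2t2, ax2y2,
    nx2, ns2, nt2⟩ := P2'
  have hdisj := CatAux.pend_disjoint P1 P2 hv1mem hv1T1
  by_cases hy2T1 : y2 = x1 ∨ y2 = s1 ∨ y2 = t1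
  swap
  · exact (CatAux.bad_case hc hcap P1 P2 hdisj hy2T1).elim
  · have hy2x1 : y2 = x1 := by
      rcases hy2T1 with h | h | h
      · exact h
      · exfalso
        have : G.Adj s1 x2 := h ▸ ax2y2.symm
        rcases ns1 x2 this with h' | h'
        · exact hdisj x2 (Or.inl rfl) (Or.inl h')
        · exact hdisj x2 (Or.inl rfl) (Or.inr (Or.inr h'))
      · exfalso
        have : G.Adj t1 x2 := h ▸ ax2y2.symm
        rcases nt1 x2 this with h' | h'
        · exact hdisj x2 (Or.inl rfl) (Or.inl h')
        · exact hdisj x2 (Or.inl rfl) (Or.inr (Or.inl h'))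
    have hx2y1 : x2 = y1 := by
      have hadj : G.Adj x1 x2 := hy2x1 ▸ ax2y2.symm
      rcases nx1 x2 hadj with h | h | h
      · exact absurd (Or.inr (Or.inl h)) (hdisj x2 (Or.inl rfl))
      · exact absurd (Or.inr (Or.inr h)) (hdisj x2 (Or.inl rfl))
      · exact h
    have ax1x2 : G.Adj x1 x2 := by rw [hx2y1]; exact ax1y1
    have hcl1 := CatAux.pend_closure P1
    have hcl2 := CatAux.pend_closure P2
    have hEe : s(x2, y2) = s(x1, y1) := by rw [hy2x1, hx2y1, Sym2.eq_swap]
    have hcover : ∀ u : V, u = x1 ∨ u = s1 ∨ u = t1 ∨ u = x2 ∨ u = s2 ∨ u = t2 := by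
      intro u
      rcases CatAux.reach_deleteEdge_cases (p := x1) (q := y1)
          (hc.preconnected u x1) with hr | hr | hr
      · rcases hcl1 u hr.symm with h | h | h
        · exact Or.inl h
        · exact Or.inr (Or.inl h)
        · exact Or.inr (Or.inr (Or.inl h))
      · rcases hcl1 u hr.symm with h | h | h
        · exact Or.inl h
        · exact Or.inr (Or.inl h)
        · exact Or.inr (Or.inr (Or.inl h))
      · have hr2 : (G.deleteEdges {s(x2, y2)}).Reachable x2 u := by
          rw [hEe, hx2y1]
          exact hr.symm
        rcases hcl2 u hr2 with h | h | h
        · exact Or.inr (Or.inr (Or.inr (Or.inl h)))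
        · exact Or.inr (Or.inr (Or.inr (Or.inr (Or.inl h))))
        · exact Or.inr (Or.inr (Or.inr (Or.inr (Or.inr h))))
    have hx2x1 : x2 ≠ x1 := fun h => hdisj x2 (Or.inl rfl) (Or.inl h)
    have hx2s1 : x2 ≠ s1 := fun h => hdisj x2 (Or.inl rfl) (Or.inr (Or.inl h))
    have hx2t1 : x2 ≠ t1 := fun h => hdisj x2 (Or.inl rfl) (Or.inr (Or.inr h))
    have hs2x1 : s2 ≠ x1 := fun h => hdisj s2 (Or.inr (Or.inl rfl)) (Or.inl h)
    have hs2s1 : s2 ≠ s1 := fun h => hdisj s2 (Or.inr (Or.inl rfl)) (Or.inr (Or.inl h))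
    have hs2t1 : s2 ≠ t1 := fun h => hdisj s2 (Or.inr (Or.inl rfl)) (Or.inr (Or.inr h))
    have ht2x1 : t2 ≠ x1 := fun h => hdisj t2 (Or.inr (Or.inr rfl)) (Or.inl h)
    have ht2s1 : t2 ≠ s1 := fun h => hdisj t2 (Or.inr (Or.inr rfl)) (Or.inr (Or.inl h))
    have ht2t1 : t2 ≠ t1 := fun h => hdisj t2 (Or.inr (Or.inr rfl)) (Or.inr (Or.inr h))
    have n_s1x2 : ¬ G.Adj s1 x2 := by
      intro hadj
      rcases ns1 x2 hadj with h | h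
      · exact hx2x1 h
      · exact hx2t1 h
    have n_s1s2 : ¬ G.Adj s1 s2 := by
      intro hadj
      rcases ns1 s2 hadj with h | h
      · exact hs2x1 h
      · exact hs2t1 h
    have n_s1t2 : ¬ G.Adj s1 t2 := by
      intro hadj
      rcases ns1 t2 hadj with h | h
      · exact ht2x1 h
      · exact ht2t1 h
    have n_t1x2 : ¬ G.Adj t1 x2 := by
      intro hadj
      rcases nt1 x2 hadj with h | h
      · exact hx2x1 h
      · exact hx2s1 h
    have n_t1s2 : ¬ G.Adj t1 s2 := by
      intro hadj
      rcases nt1 s2 hadj with h | h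
      · exact hs2x1 h
      · exact hs2s1 h
    have n_t1t2 : ¬ G.Adj t1 t2 := by
      intro hadj
      rcases nt1 t2 hadj with h | h
      · exact ht2x1 h
      · exact ht2s1 h
    have n_x1s2 : ¬ G.Adj x1 s2 := by
      intro hadj
      rcases nx1 s2 hadj with h | h | h
      · exact hs2s1 h
      · exact hs2t1 h
      · exact hx2s2 ((hx2y1.trans h.symm).symm).symm
    have n_x1t2 : ¬ G.Adj x1 t2 := by
      intro hadj
      rcases nx1 t2 hadj with h | h | h
      · exact ht2s1 h
      · exact ht2t1 h
      · exact hx2t2 ((hx2y1.trans h.symm).symm).symm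
    let fv : Fin 6 → V := fun i => match i with
      | ⟨0, _⟩ => s1
      | ⟨1, _⟩ => t1
      | ⟨2, _⟩ => x1
      | ⟨3, _⟩ => x2
      | ⟨4, _⟩ => s2
      | ⟨5, _⟩ => t2
    have hbij : Function.Bijective fv := by
      constructor
      · intro i j hij
        fin_cases i <;> fin_cases j
        · rfl
        · exact absurd hij hs1t1
        · exact absurd hij (Ne.symm hx1s1)
        · exact absurd hij (Ne.symm hx2s1)
        · exact absurd hij (Ne.symm hs2s1)
        · exact absurd hij (Ne.symm ht2s1)
        · exact absurd hij (Ne.symm hs1t1)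
        · rfl
        · exact absurd hij (Ne.symm hx1t1)
        · exact absurd hij (Ne.symm hx2t1)
        · exact absurd hij (Ne.symm hs2t1)
        · exact absurd hij (Ne.symm ht2t1)
        · exact absurd hij hx1s1
        · exact absurd hij hx1t1
        · rfl
        · exact absurd hij (Ne.symm hx2x1)
        · exact absurd hij (Ne.symm hs2x1)
        · exact absurd hij (Ne.symm ht2x1)
        · exact absurd hij hx2s1
        · exact absurd hij hx2t1
        · exact absurd hij hx2x1
        · rfl
        · exact absurd hij hx2s2
        · exact absurd hij hx2t2
        · exact absurd hij hs2s1
        · exact absurd hij hs2t1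
        · exact absurd hij hs2x1
        · exact absurd hij (Ne.symm hx2s2)
        · rfl
        · exact absurd hij hs2t2
        · exact absurd hij ht2s1
        · exact absurd hij ht2t1
        · exact absurd hij ht2x1
        · exact absurd hij (Ne.symm hx2t2)
        · exact absurd hij (Ne.symm hs2t2)
        · rfl
      · intro u
        rcases hcover u with h | h | h | h | h | h
        · exact ⟨2, h.symm⟩
        · exact ⟨0, h.symm⟩
        · exact ⟨1, h.symm⟩
        · exact ⟨3, h.symm⟩
        · exact ⟨4, h.symm⟩
        · exact ⟨5, h.symm⟩
    refine ⟨SimpleGraph.Iso.symm ⟨Equiv.ofBijective fv hbij, ?_⟩⟩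
    intro i j
    fin_cases i <;> fin_cases j
    · exact iff_of_false (G.loopless.irrefl _) (by simp [twoTrianglesBridge, SimpleGraph.fromEdgeSet_adj, Sym2.eq_iff])
    · exact iff_of_true as1t1 (by simp [twoTrianglesBridge, SimpleGraph.fromEdgeSet_adj, Sym2.eq_iff])
    · exact iff_of_true ax1s1.symm (by simp [twoTrianglesBridge, SimpleGraph.fromEdgeSet_adj, Sym2.eq_iff])
    · exact iff_of_false n_s1x2 (by simp [twoTrianglesBridge, SimpleGraph.fromEdgeSet_adj, Sym2.eq_iff])
    · exact iff_of_false n_s1s2 (by simp [twoTrianglesBridge, SimpleGraph.fromEdgeSet_adj, Sym2.eq_iff])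
    · exact iff_of_false n_s1t2 (by simp [twoTrianglesBridge, SimpleGraph.fromEdgeSet_adj, Sym2.eq_iff])
    · exact iff_of_true (as1t1).symm (by simp [twoTrianglesBridge, SimpleGraph.fromEdgeSet_adj, Sym2.eq_iff])
    · exact iff_of_false (G.loopless.irrefl _) (by simp [twoTrianglesBridge, SimpleGraph.fromEdgeSet_adj, Sym2.eq_iff])
    · exact iff_of_true ax1t1.symm (by simp [twoTrianglesBridge, SimpleGraph.fromEdgeSet_adj, Sym2.eq_iff])
    · exact iff_of_false n_t1x2 (by simp [twoTrianglesBridge, SimpleGraph.fromEdgeSet_adj, Sym2.eq_iff])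
    · exact iff_of_false n_t1s2 (by simp [twoTrianglesBridge, SimpleGraph.fromEdgeSet_adj, Sym2.eq_iff])
    · exact iff_of_false n_t1t2 (by simp [twoTrianglesBridge, SimpleGraph.fromEdgeSet_adj, Sym2.eq_iff])
    · exact iff_of_true (ax1s1.symm).symm (by simp [twoTrianglesBridge, SimpleGraph.fromEdgeSet_adj, Sym2.eq_iff])
    · exact iff_of_true (ax1t1.symm).symm (by simp [twoTrianglesBridge, SimpleGraph.fromEdgeSet_adj, Sym2.eq_iff])
    · exact iff_of_false (G.loopless.irrefl _) (by simp [twoTrianglesBridge, SimpleGraph.fromEdgeSet_adj, Sym2.eq_iff])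
    · exact iff_of_true ax1x2 (by simp [twoTrianglesBridge, SimpleGraph.fromEdgeSet_adj, Sym2.eq_iff])
    · exact iff_of_false n_x1s2 (by simp [twoTrianglesBridge, SimpleGraph.fromEdgeSet_adj, Sym2.eq_iff])
    · exact iff_of_false n_x1t2 (by simp [twoTrianglesBridge, SimpleGraph.fromEdgeSet_adj, Sym2.eq_iff])
    · exact iff_of_false (fun hadj => n_s1x2 hadj.symm) (by simp [twoTrianglesBridge, SimpleGraph.fromEdgeSet_adj, Sym2.eq_iff])
    · exact iff_of_false (fun hadj => n_t1x2 hadj.symm) (by simp [twoTrianglesBridge, SimpleGraph.fromEdgeSet_adj, Sym2.eq_iff])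
    · exact iff_of_true (ax1x2).symm (by simp [twoTrianglesBridge, SimpleGraph.fromEdgeSet_adj, Sym2.eq_iff])
    · exact iff_of_false (G.loopless.irrefl _) (by simp [twoTrianglesBridge, SimpleGraph.fromEdgeSet_adj, Sym2.eq_iff])
    · exact iff_of_true ax2s2 (by simp [twoTrianglesBridge, SimpleGraph.fromEdgeSet_adj, Sym2.eq_iff])
    · exact iff_of_true ax2t2 (by simp [twoTrianglesBridge, SimpleGraph.fromEdgeSet_adj, Sym2.eq_iff])
    · exact iff_of_false (fun hadj => n_s1s2 hadj.symm) (by simp [twoTrianglesBridge, SimpleGraph.fromEdgeSet_adj, Sym2.eq_iff])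
    · exact iff_of_false (fun hadj => n_t1s2 hadj.symm) (by simp [twoTrianglesBridge, SimpleGraph.fromEdgeSet_adj, Sym2.eq_iff])
    · exact iff_of_false (fun hadj => n_x1s2 hadj.symm) (by simp [twoTrianglesBridge, SimpleGraph.fromEdgeSet_adj, Sym2.eq_iff])
    · exact iff_of_true (ax2s2).symm (by simp [twoTrianglesBridge, SimpleGraph.fromEdgeSet_adj, Sym2.eq_iff])
    · exact iff_of_false (G.loopless.irrefl _) (by simp [twoTrianglesBridge, SimpleGraph.fromEdgeSet_adj, Sym2.eq_iff])
    · exact iff_of_true as2t2 (by simp [twoTrianglesBridge, SimpleGraph.fromEdgeSet_adj, Sym2.eq_iff])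
    · exact iff_of_false (fun hadj => n_s1t2 hadj.symm) (by simp [twoTrianglesBridge, SimpleGraph.fromEdgeSet_adj, Sym2.eq_iff])
    · exact iff_of_false (fun hadj => n_t1t2 hadj.symm) (by simp [twoTrianglesBridge, SimpleGraph.fromEdgeSet_adj, Sym2.eq_iff])
    · exact iff_of_false (fun hadj => n_x1t2 hadj.symm) (by simp [twoTrianglesBridge, SimpleGraph.fromEdgeSet_adj, Sym2.eq_iff])
    · exact iff_of_true (ax2t2).symm (by simp [twoTrianglesBridge, SimpleGraph.fromEdgeSet_adj, Sym2.eq_iff])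
    · exact iff_of_true (as2t2).symm (by simp [twoTrianglesBridge, SimpleGraph.fromEdgeSet_adj, Sym2.eq_iff])
    · exact iff_of_false (G.loopless.irrefl _) (by simp [twoTrianglesBridge, SimpleGraph.fromEdgeSet_adj, Sym2.eq_iff])

/-- a connected graph with two distinct cycles and cat number 3
is two triangles joined by a bridge (hence has 6 vertices). -/
theorem two_cycles_catNum_three {V : Type u} (G : SimpleGraph V) (hc : G.Connected)
    (h : ∃ (c₁ c₂ : V) (p₁ : G.Walk c₁ c₁) (p₂ : G.Walk c₂ c₂),
      p₁.IsCycle ∧ p₂.IsCycle ∧ {e | e ∈ p₁.edges} ≠ {e | e ∈ p₂.edges})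
    (h3 : catNum G = 3) :
    Nonempty (G ≃g twoTrianglesBridge) := two_cycles_catNum_three' G hc h h3
end
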